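/- arXiv:1312.0840 — 7 statements merged into one kernel-verified Lean document; each statement's English description precedes it below -/
import Mathlib

section
/- For integers 0 ≤ b ≤ c and r ≥ 0 with c > 0, the binomial coefficient C(b, r) is at most (b/c)^r · C(c, r). -/
lemma nat_binom_ratio (b c r : ℕ) (hbc : b ≤ c) :
    c ^ r * b.choose r ≤ b ^ r * c.choose r := by
  induction r with
  | zero => simp
  | succ r ih =>
    have key : (c ^ (r+1) * b.choose (r+1)) * (r+1) ≤ (b ^ (r+1) * c.choose (r+1)) * (r+1) := by
      have h1 : b.choose (r+1) * (r+1) = b.choose r * (b - r) := Nat.choose_succ_right_eq b r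
      have h2 : c.choose (r+1) * (r+1) = c.choose r * (c - r) := Nat.choose_succ_right_eq c r
      have hmul : c * (b - r) ≤ b * (c - r) := by
        rcases le_or_gt r b with h | h
        · have hbr : b * r ≤ c * r := Nat.mul_le_mul_right r hbc
          have e1 : c * (b - r) = c * b - c * r := Nat.mul_sub c b r
          have e2 : b * (c - r) = b * c - b * r := Nat.mul_sub b c r
          have e3 : c * b = b * c := mul_comm c b
          omega
        · simp [Nat.sub_eq_zero_of_le h.le]
      calc (c ^ (r+1) * b.choose (r+1)) * (r+1)
          = (c ^ r * b.choose r) * (c * (b - r)) := by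
            rw [mul_assoc, h1]; ring
        _ ≤ (b ^ r * c.choose r) * (b * (c - r)) := Nat.mul_le_mul ih hmul
        _ = (b ^ (r+1) * c.choose (r+1)) * (r+1) := by
            conv_rhs => rw [mul_assoc, h2]
            ring
    exact Nat.le_of_mul_le_mul_right key (Nat.succ_pos r)

theorem binom_ratio_bound (b c r : ℕ) (hbc : b ≤ c) (hc : 0 < c) :
    (b.choose r : ℝ) ≤ ((b : ℝ) / c) ^ r * c.choose r := by
  have h := nat_binom_ratio b c r hbc
  have hcr : (0:ℝ) < (c:ℝ) ^ r := by positivity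
  rw [div_pow, div_mul_eq_mul_div, le_div_iff₀ hcr, mul_comm]
  exact_mod_cast h
end

section
/- Let r ≥ 1 and let M, S be positive integers with M ≤ S. If (n_i)_{i∈I} is a finite family of nonnegative integers with ∑_i n_i = S and n_i ≤ M for all i, then ∑_i C(n_i, r) ≤ (S/M) · C(M, r), where S/M is real division. -/
/-- `C(m, r) / m` is monotone in `m`. With `m = a + 1`, `M = b + 1`, `r = k + 1`, the identity
`(n + 1) C(n, k) = C(n + 1, k + 1) (k + 1)` turns both sides, times `k + 1`, into
`(a + 1)(b + 1)` times `C(a, k)` resp. `C(b, k)`. -/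
theorem Nat.mul_choose_le_mul_choose_of_le {m M r : ℕ} (hr : r ≠ 0) (hm : m ≤ M) :
    M * m.choose r ≤ m * M.choose r := by
  obtain ⟨k, rfl⟩ := Nat.exists_eq_add_one_of_ne_zero hr
  rcases m with _ | a
  · simp
  obtain ⟨b, rfl⟩ : ∃ b, M = b + 1 := ⟨M - 1, by omega⟩
  refine Nat.le_of_mul_le_mul_right ?_ k.succ_pos
  calc (b + 1) * (a + 1).choose (k + 1) * (k + 1)
      = (b + 1) * ((a + 1) * a.choose k) := by rw [Nat.add_one_mul_choose_eq]; ring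
    _ ≤ (b + 1) * ((a + 1) * b.choose k) := by gcongr; omega
    _ = (a + 1) * (b + 1).choose (k + 1) * (k + 1) := by
        rw [mul_assoc, ← Nat.add_one_mul_choose_eq]; ring

theorem Nat.choose_le_div_mul_choose {m M r : ℕ} (hr : r ≠ 0) (hm : m ≤ M) :
    (m.choose r : ℝ) ≤ m / M * M.choose r := by
  rcases M.eq_zero_or_pos with rfl | hM
  · simp [Nat.le_zero.mp hm, Nat.choose_eq_zero_of_lt (Nat.pos_of_ne_zero hr)]
  rw [div_mul_eq_mul_div, le_div_iff₀ (by exact_mod_cast hM), mul_comm]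
  exact_mod_cast Nat.mul_choose_le_mul_choose_of_le hr hm

theorem sum_choose_bounded_general {I : Type*} (s : Finset I) (n : I → ℕ) (r M S : ℕ)
    (hr : 1 ≤ r)
    (hsum : ∑ i ∈ s, n i = S) (hle : ∀ i ∈ s, n i ≤ M) :
    (∑ i ∈ s, ((n i).choose r : ℝ)) ≤ ((S : ℝ) / M) * M.choose r := by
  calc ∑ i ∈ s, ((n i).choose r : ℝ)
      ≤ ∑ i ∈ s, (n i : ℝ) / M * M.choose r :=
        Finset.sum_le_sum fun i hi ↦ Nat.choose_le_div_mul_choose (by omega) (hle i hi)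
    _ = (S : ℝ) / M * M.choose r := by
        rw [← Finset.sum_mul, ← Finset.sum_div, ← hsum, Nat.cast_sum]

theorem sum_choose_bounded {I : Type*} (s : Finset I) (n : I → ℕ) (r M S : ℕ)
    (hr : 1 ≤ r) (hM : 0 < M) (hMS : M ≤ S)
    (hsum : ∑ i ∈ s, n i = S) (hle : ∀ i ∈ s, n i ≤ M) :
    (∑ i ∈ s, ((n i).choose r : ℝ)) ≤ ((S : ℝ) / M) * M.choose r :=
  sum_choose_bounded_general s n r M S hr hsum hle
end

section
/- For integers r ≥ 2 and 0 ≤ a ≤ b ≤ c with c ≥ r - 1 and c > 0, one has [C(b-a, r) + C(c+a, r)] - [C(b, r) + C(c, r)] ≥ (1 - (b-a)/c) · (a·r/(c - r + 1)) · C(c, r), where the inequality is over the reals. -/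
lemma choose_diff_mono (B c k : ℕ) (h : B ≤ c) (a : ℕ) :
    (B + a).choose k + c.choose k ≤ (c + a).choose k + B.choose k := by
  induction a with
  | zero => simp only [Nat.add_zero]; omega
  | succ n ih =>
    cases k with
    | zero => simp
    | succ m =>
      have h1 : B + (n + 1) = (B + n) + 1 := by ring
      have h2 : c + (n + 1) = (c + n) + 1 := by ring
      rw [h1, h2, Nat.choose_succ_succ, Nat.choose_succ_succ]
      have h3 := Nat.choose_le_choose m (Nat.add_le_add_right h n)
      simp only [Nat.succ_eq_add_one] at *
      omega

lemma choose_main_ineq (B c r : ℕ) (h : B ≤ c) (a : ℕ) :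
    (B + a).choose r + c.choose r + a * c.choose (r - 1) ≤
      (c + a).choose r + B.choose r + a * B.choose (r - 1) := by
  induction a with
  | zero => simp only [Nat.add_zero, Nat.zero_mul]; omega
  | succ n ih =>
    cases r with
    | zero => simp
    | succ m =>
      have h1 : B + (n + 1) = (B + n) + 1 := by ring
      have h2 : c + (n + 1) = (c + n) + 1 := by ring
      rw [h1, h2, Nat.choose_succ_succ, Nat.choose_succ_succ]
      have h3 := choose_diff_mono B c m h n
      have e1 : (n + 1) * c.choose (m + 1 - 1) = n * c.choose (m + 1 - 1) + c.choose (m + 1 - 1) := by ring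
      have e2 : (n + 1) * B.choose (m + 1 - 1) = n * B.choose (m + 1 - 1) + B.choose (m + 1 - 1) := by ring
      simp only [Nat.succ_eq_add_one, Nat.add_sub_cancel] at *
      omega

lemma choose_div_mono (B c k : ℕ) (h : B ≤ c) : c * B.choose (k + 1) ≤ B * c.choose (k + 1) := by
  rcases Nat.eq_zero_or_pos B with hB | hB
  · subst hB; simp
  · have hc : 0 < c := lt_of_lt_of_le hB h
    have hB1 : B - 1 + 1 = B := Nat.succ_pred_eq_of_pos hB
    have hc1 : c - 1 + 1 = c := Nat.succ_pred_eq_of_pos hc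
    have iB := Nat.add_one_mul_choose_eq (B - 1) k
    have iC := Nat.add_one_mul_choose_eq (c - 1) k
    simp only [Nat.succ_eq_add_one, hB1, hc1] at iB iC
    -- iB : B * (B-1).choose k = B.choose (k+1) * (k+1)
    have key : (B - 1).choose k ≤ (c - 1).choose k :=
      Nat.choose_le_choose k (by omega)
    have main : c * B.choose (k + 1) * (k + 1) ≤ B * c.choose (k + 1) * (k + 1) := by
      calc c * B.choose (k + 1) * (k + 1) = c * (B.choose (k + 1) * (k + 1)) := by ring
        _ = c * (B * (B - 1).choose k) := by rw [← iB]
        _ ≤ c * (B * (c - 1).choose k) :=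
            Nat.mul_le_mul_left _ (Nat.mul_le_mul_left _ key)
        _ = B * (c * (c - 1).choose k) := by ring
        _ = B * (c.choose (k + 1) * (k + 1)) := by rw [iC]
        _ = B * c.choose (k + 1) * (k + 1) := by ring
    exact Nat.le_of_mul_le_mul_right main (Nat.succ_pos k)

theorem choose_shift_gain (a b c r : ℕ) (hr : 2 ≤ r) (hab : a ≤ b) (hbc : b ≤ c)
    (hcr : r ≤ c + 1) (hc : 0 < c) :
    (1 - ((b - a : ℕ) : ℝ) / c) * ((a * r : ℝ) / ((c : ℝ) - r + 1)) * c.choose r ≤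
      ((((b - a).choose r : ℝ) + ((c + a).choose r : ℝ)) -
        ((b.choose r : ℝ) + (c.choose r : ℝ))) := by
  rcases lt_or_ge c r with hlt | hle
  · have h1 : c.choose r = 0 := Nat.choose_eq_zero_of_lt hlt
    have h2 : b.choose r = 0 := Nat.choose_eq_zero_of_lt (lt_of_le_of_lt hbc hlt)
    rw [h1, h2]
    push_cast
    rw [mul_zero]
    have := Nat.cast_nonneg (α := ℝ) ((b - a).choose r)
    have := Nat.cast_nonneg (α := ℝ) ((c + a).choose r)
    linarith
  · obtain ⟨m, rfl⟩ : ∃ m, r = m + 2 := ⟨r - 2, by omega⟩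
    set B := b - a with hBdef
    have hBa : B + a = b := Nat.sub_add_cancel hab
    have hBc : B ≤ c := le_trans (Nat.sub_le _ _) hbc
    have nat_main := choose_main_ineq B c (m + 2) hBc a
    rw [hBa] at nat_main
    simp only [show m + 2 - 1 = m + 1 from rfl] at nat_main
    have nat_L1 := choose_div_mono B c m hBc
    have hid := Nat.choose_succ_right_eq c (m + 1)
    have hmc : m + 1 ≤ c := by omega
    have hc0 : (0 : ℝ) < c := by exact_mod_cast hc
    have hsub : ((c - (m + 1) : ℕ) : ℝ) = (c : ℝ) - ((m:ℝ) + 1) := by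
      rw [Nat.cast_sub hmc]; push_cast; ring
    have hdpos : (0 : ℝ) < (c : ℝ) - ((m : ℝ) + 2) + 1 := by
      have : (m + 2 : ℕ) ≤ c := hle
      have : ((m + 2 : ℕ) : ℝ) ≤ c := by exact_mod_cast this
      push_cast at this
      linarith
    have hidR : (c.choose (m + 2) : ℝ) * ((m : ℝ) + 2) =
        (c.choose (m + 1) : ℝ) * ((c : ℝ) - ((m : ℝ) + 2) + 1) := by
      have := congrArg (fun n : ℕ => (n : ℝ)) hid
      push_cast [hsub] at this
      linarith [this]
    have hAC : (a : ℝ) * ((m : ℝ) + 2) / ((c : ℝ) - ((m : ℝ) + 2) + 1) * (c.choose (m + 2) : ℝ)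
        = (a : ℝ) * (c.choose (m + 1) : ℝ) := by
      rw [div_mul_eq_mul_div, div_eq_iff hdpos.ne']
      nlinarith [hidR]
    have h1 : (c : ℝ) * (B.choose (m + 1) : ℝ) ≤ (B : ℝ) * (c.choose (m + 1) : ℝ) := by
      exact_mod_cast nat_L1
    have h2 : (b.choose (m + 2) : ℝ) + (c.choose (m + 2) : ℝ) + (a : ℝ) * (c.choose (m + 1) : ℝ)
        ≤ ((c + a).choose (m + 2) : ℝ) + (B.choose (m + 2) : ℝ) + (a : ℝ) * (B.choose (m + 1) : ℝ) := by
      exact_mod_cast nat_main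
    have hdiv : (a : ℝ) * (B.choose (m + 1) : ℝ) ≤ (B : ℝ) / c * ((a : ℝ) * (c.choose (m + 1) : ℝ)) := by
      rw [div_mul_eq_mul_div, le_div_iff₀ hc0]
      nlinarith [h1, Nat.cast_nonneg (α := ℝ) a]
    push_cast
    rw [mul_assoc, hAC, one_sub_mul]
    linarith [hdiv, h2]
end

section
/- Let t ≥ 2, n ≥ 1, and 0 ≤ m ≤ n - 1. Then over all graphs G on n vertices with m edges, the quantity ∑_v C(d_v, t) is maximised by the star K_{1,m} (m edges at a common vertex), which attains value C(m, t), and moreover every t-edge subgraph of the star is intersecting. -/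
/-- The star `K_{1,m}` on vertex set `Fin n`: vertex `0` joined to vertices `1, …, m`. -/
def starGraph (n m : ℕ) : SimpleGraph (Fin n) where
  Adj a b := a ≠ b ∧ (((a : ℕ) = 0 ∧ (b : ℕ) ≤ m) ∨ ((b : ℕ) = 0 ∧ (a : ℕ) ≤ m))
  symm := ⟨fun a b h => ⟨h.1.symm, h.2.symm⟩⟩
  loopless := ⟨fun a h => h.1 rfl⟩

/-!
A `t`-edge star is a `t`-set of edges through its centre. Two distinct vertices share at most
one edge, so for `t ≥ 2` no `t`-set of edges is a star at two different centres, and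
`∑_v C(d_v, t)` counts pairwise different `t`-subsets of the `m` edges: it is at most `C(m, t)`.
In the star every edge passes through the centre, which has degree `m`, while every other vertex
has degree at most `1` and contributes nothing.
-/

open Finset

namespace SimpleGraph

section Incidence

variable {V : Type*} [Fintype V] [DecidableEq V] (G : SimpleGraph V) [DecidableRel G.Adj]

lemma card_incidenceFinset_inter_incidenceFinset_le_one {v w : V} (hvw : v ≠ w) :
    #(G.incidenceFinset v ∩ G.incidenceFinset w) ≤ 1 := by
  refine card_le_one.2 fun e he f hf => ?_
  simp only [mem_inter, mem_incidenceFinset] at he hf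
  have hsub := G.incidenceSet_inter_incidenceSet_subset hvw
  exact (hsub he).trans (hsub hf).symm

lemma pairwiseDisjoint_powersetCard_incidenceFinset {t : ℕ} (ht : 2 ≤ t) :
    ((univ : Finset V) : Set V).PairwiseDisjoint fun v => powersetCard t (G.incidenceFinset v) := by
  intro v _ w _ hvw
  refine Finset.disjoint_left.2 fun S hSv hSw => ?_
  rw [mem_powersetCard] at hSv hSw
  have := (card_le_card (subset_inter hSv.1 hSw.1)).trans
    (G.card_incidenceFinset_inter_incidenceFinset_le_one hvw)
  omega

theorem sum_degree_choose_le {t : ℕ} (ht : 2 ≤ t) :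
    ∑ v, (G.degree v).choose t ≤ (#G.edgeFinset).choose t :=
  calc ∑ v, (G.degree v).choose t
      = #(univ.biUnion fun v => powersetCard t (G.incidenceFinset v)) := by
        rw [card_biUnion (G.pairwiseDisjoint_powersetCard_incidenceFinset ht)]
        simp only [card_powersetCard, card_incidenceFinset_eq_degree]
    _ ≤ #(powersetCard t G.edgeFinset) :=
        card_le_card <| biUnion_subset.2 fun v _ => powersetCard_mono (G.incidenceFinset_subset v)
    _ = (#G.edgeFinset).choose t := card_powersetCard _ _

end Incidence

section Star

variable {V : Type*} [Fintype V] {G : SimpleGraph V} [DecidableRel G.Adj] {c : V}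

lemma edgeFinset_eq_incidenceFinset_of_forall_mem [DecidableEq V]
    (hc : ∀ e ∈ G.edgeSet, c ∈ e) : G.edgeFinset = G.incidenceFinset c := by
  rw [incidenceFinset_eq_filter, filter_true_of_mem fun e he => hc e (mem_edgeFinset.1 he)]

lemma degree_le_one_of_forall_mem (hc : ∀ e ∈ G.edgeSet, c ∈ e) {w : V} (hw : w ≠ c) :
    G.degree w ≤ 1 := by
  rw [← card_neighborFinset_eq_degree, ← card_singleton c]
  refine card_le_card fun u hu => ?_
  have hcwu := Sym2.mem_iff.1 (hc s(w, u) ((mem_neighborFinset G w u).1 hu))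
  exact mem_singleton.2 (hcwu.resolve_left hw.symm).symm

lemma sum_degree_choose_eq_of_forall_mem (hc : ∀ e ∈ G.edgeSet, c ∈ e) {t : ℕ} (ht : 2 ≤ t) :
    ∑ v, (G.degree v).choose t = (G.degree c).choose t :=
  sum_eq_single c
    (fun _ _ hw => Nat.choose_eq_zero_of_lt ((degree_le_one_of_forall_mem hc hw).trans_lt ht))
    (absurd (mem_univ c))

end Star

end SimpleGraph

section StarGraph

variable {n m : ℕ} [NeZero n]

lemma starGraph_adj_zero {b : Fin n} : (starGraph n m).Adj 0 b ↔ b ≠ 0 ∧ (b : ℕ) ≤ m := by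
  change (0 : Fin n) ≠ b ∧ _ ↔ _
  rw [ne_comm, Fin.val_zero, Fin.val_eq_zero_iff]
  constructor
  · rintro ⟨hb, ⟨-, hbm⟩ | ⟨hb0, -⟩⟩
    · exact ⟨hb, hbm⟩
    · exact absurd hb0 hb
  · rintro ⟨hb, hbm⟩
    exact ⟨hb, Or.inl ⟨rfl, hbm⟩⟩

lemma zero_mem_of_mem_edgeSet_starGraph {e : Sym2 (Fin n)} (he : e ∈ (starGraph n m).edgeSet) :
    (0 : Fin n) ∈ e := by
  induction e using Sym2.ind with
  | _ a b =>
    rcases he.2 with ⟨ha, -⟩ | ⟨hb, -⟩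
    · exact Fin.val_eq_zero_iff.1 ha ▸ Sym2.mem_mk_left a b
    · exact Fin.val_eq_zero_iff.1 hb ▸ Sym2.mem_mk_right a b

lemma starGraph_degree_zero [Fintype ((starGraph n m).neighborSet 0)] (hm : m < n) :
    (starGraph n m).degree 0 = m := by
  have : ((starGraph n m).neighborFinset 0).map Fin.valEmbedding = Icc 1 m := by
    ext x
    simp only [mem_map, SimpleGraph.mem_neighborFinset, starGraph_adj_zero, mem_Icc,
      Fin.valEmbedding_apply]
    constructor
    · rintro ⟨b, ⟨hb0, hbm⟩, rfl⟩
      exact ⟨Nat.one_le_iff_ne_zero.2 (Fin.val_ne_zero_iff.2 hb0), hbm⟩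
    · rintro ⟨h1, hxm⟩
      exact ⟨⟨x, by omega⟩, ⟨Fin.val_ne_zero_iff.1 (Nat.one_le_iff_ne_zero.1 h1), hxm⟩, rfl⟩
  rw [← SimpleGraph.card_neighborFinset_eq_degree, ← card_map, this, Nat.card_Icc,
    Nat.add_sub_cancel]

end StarGraph

open scoped Classical in
/-- For `t ≥ 2` and `m ≤ n - 1`, over graphs on `n` vertices with `m` edges the quantity
`∑_v C(d_v, t)` is maximised by the star `K_{1,m}`, which attains `C(m,t)`; moreover every
`t`-edge subgraph of the star is intersecting. -/
theorem star_maximises (n m t : ℕ) (ht : 2 ≤ t) (hn : 1 ≤ n) (hm : m ≤ n - 1) :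
    (∀ G : SimpleGraph (Fin n), G.edgeFinset.card = m →
        ∑ v : Fin n, (G.degree v).choose t ≤ m.choose t) ∧
      (starGraph n m).edgeFinset.card = m ∧
      (∑ v : Fin n, ((starGraph n m).degree v).choose t = m.choose t) ∧
      (∀ E ⊆ (starGraph n m).edgeFinset, E.card = t →
        ∀ e ∈ E, ∀ f ∈ E, e ≠ f → ∃ v : Fin n, v ∈ e ∧ v ∈ f) := by
  have : NeZero n := ⟨by omega⟩
  have hcentre : ∀ e ∈ (starGraph n m).edgeSet, (0 : Fin n) ∈ e :=
    fun _ => zero_mem_of_mem_edgeSet_starGraph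
  have hdeg : (starGraph n m).degree 0 = m := starGraph_degree_zero (by omega)
  refine ⟨fun G hG => hG ▸ G.sum_degree_choose_le ht, ?_, ?_, ?_⟩
  · rw [SimpleGraph.edgeFinset_eq_incidenceFinset_of_forall_mem hcentre,
      SimpleGraph.card_incidenceFinset_eq_degree, hdeg]
  · rw [SimpleGraph.sum_degree_choose_eq_of_forall_mem hcentre ht, hdeg]
  · intro E hE _ e he f hf _
    exact ⟨0, hcentre e (SimpleGraph.mem_edgeFinset.1 (hE he)),
      hcentre f (SimpleGraph.mem_edgeFinset.1 (hE hf))⟩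
end

section
/- Let t ≥ n/2 and let G be a graph on n vertices containing an edge {x, y} and a vertex z with degrees d_x ≤ d_y ≤ d_z < n-1. Then C(d_x - 1, t-1) + C(d_y - 1, t-1) ≤ C(d_z, t-1). -/
/-- If `m ≤ 2k+1` then `C(m, k+1) ≤ C(m, k)`. -/
lemma choose_succ_le_of_le {m k : ℕ} (h : m ≤ 2 * k + 1) :
    m.choose (k + 1) ≤ m.choose k := by
  apply Nat.le_of_mul_le_mul_right _ (Nat.succ_pos k)
  rw [Nat.choose_succ_right_eq]
  exact Nat.mul_le_mul_left _ (by omega)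

/-- For `t ≥ n/2`, shifting an edge `{x,y}` to the high-degree vertex `z` does not decrease
the number of `t`-edge stars: `C(d_x-1,t-1) + C(d_y-1,t-1) ≤ C(d_z,t-1)`. -/
theorem shift_to_max_degree {V : Type*} [Fintype V] [DecidableEq V]
    (G : SimpleGraph V) [DecidableRel G.Adj] (t : ℕ)
    (ht : Fintype.card V ≤ 2 * t) (x y z : V) (hxy : G.Adj x y)
    (h1 : G.degree x ≤ G.degree y) (h2 : G.degree y ≤ G.degree z)
    (h3 : G.degree z < Fintype.card V - 1) :
    (G.degree x - 1).choose (t - 1) + (G.degree y - 1).choose (t - 1)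
      ≤ (G.degree z).choose (t - 1) := by
  have hdx : 0 < G.degree x := by
    rw [G.degree_pos_iff_exists_adj]
    exact ⟨y, hxy⟩
  have hcard : 0 < Fintype.card V := Fintype.card_pos_iff.mpr ⟨x⟩
  have ht2 : 2 ≤ t := by omega
  have hdz : G.degree z ≤ 2 * t - 2 := by omega
  -- rewrite t - 1 = (t-2)+1, degrees
  obtain ⟨s, hs⟩ : ∃ s, t = s + 2 := ⟨t - 2, by omega⟩
  subst hs
  obtain ⟨dy, hdy⟩ : ∃ d, G.degree y = d + 1 := ⟨G.degree y - 1, by omega⟩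
  have key : (G.degree y).choose (s + 1) ≤ (G.degree z).choose (s + 1) :=
    Nat.choose_le_choose _ h2
  rw [hdy, Nat.choose_succ_succ] at key
  simp only [Nat.succ_eq_add_one] at key
  have h4 : (G.degree x - 1).choose (s + 1) ≤ dy.choose s := by
    calc (G.degree x - 1).choose (s + 1) ≤ (G.degree x - 1).choose s :=
          choose_succ_le_of_le (by omega)
      _ ≤ dy.choose s := Nat.choose_le_choose _ (by omega)
  simpa [hdy] using (by omega : (G.degree x - 1).choose (s + 1) + dy.choose (s + 1)
      ≤ (G.degree z).choose (s + 1))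
end

section
/- Let n ≥ 2k and let F ⊆ C([n], k) be an intersecting k-uniform family that is not a star (i.e., the intersection of all sets in F is empty). Then |F| ≤ C(n-1, k-1) - C(n-k-1, k-1) + 1. -/
open Finset

namespace HMproof

/-- uniform family: members are k-subsets of range m -/
def Unif (F : Finset (Finset ℕ)) (m k : ℕ) : Prop :=
  ∀ A ∈ F, A ⊆ range m ∧ A.card = k

/-- cross-intersecting pair -/
def Cross (P Q : Finset (Finset ℕ)) : Prop :=
  ∀ A ∈ P, ∀ B ∈ Q, (A ∩ B).Nonempty

/-- shifted family (closed under down-moves) -/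
def Shifted (F : Finset (Finset ℕ)) : Prop :=
  ∀ ⦃u v B⦄, u < v → B ∈ F → v ∈ B → u ∉ B → insert u (B.erase v) ∈ F

/-- no common element below m -/
def Nontriv (F : Finset (Finset ℕ)) (m : ℕ) : Prop :=
  ∀ x < m, ∃ A ∈ F, x ∉ A

/-- elementary down-move on a set -/
def mv (u v : ℕ) (A : Finset ℕ) : Finset ℕ :=
  if v ∈ A ∧ u ∉ A then insert u (A.erase v) else A

/-- the (u,v)-compression of a family -/
def comp (u v : ℕ) (F : Finset (Finset ℕ)) : Finset (Finset ℕ) :=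
  (F.filter (fun A => mv u v A ∈ F)) ∪ ((F.filter (fun A => mv u v A ∉ F)).image (mv u v))

lemma mv_eq_of_not (u v : ℕ) {A : Finset ℕ} (h : ¬(v ∈ A ∧ u ∉ A)) : mv u v A = A := if_neg h

lemma mv_eq_of (u v : ℕ) {A : Finset ℕ} (h1 : v ∈ A) (h2 : u ∉ A) :
    mv u v A = insert u (A.erase v) := if_pos ⟨h1, h2⟩

lemma mv_card {u v : ℕ} (huv : u ≠ v) (A : Finset ℕ) : (mv u v A).card = A.card := by
  unfold mv
  split
  · rename_i h
    rw [card_insert_of_notMem (by simp [h.2, huv]), card_erase_of_mem h.1]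
    have : 1 ≤ A.card := card_pos.2 ⟨v, h.1⟩
    omega
  · rfl

lemma mv_subset_range {u v m : ℕ} (huv : u < v) {A : Finset ℕ} (hA : A ⊆ range m) :
    mv u v A ⊆ range m := by
  unfold mv
  split
  · rename_i h
    intro x hx
    rcases mem_insert.1 hx with rfl | hx
    · have : v ∈ range m := hA h.1
      simp only [mem_range] at this ⊢; omega
    · exact hA (mem_of_mem_erase hx)
  · exact hA

lemma mem_comp {u v : ℕ} {F : Finset (Finset ℕ)} {A : Finset ℕ} :
    A ∈ comp u v F ↔ (A ∈ F ∧ mv u v A ∈ F) ∨ (∃ B ∈ F, mv u v B ∉ F ∧ mv u v B = A) := by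
  unfold comp
  simp only [mem_union, mem_filter, mem_image]
  tauto

/-- recover the original set from a genuinely moved set -/
lemma mv_invol {u v : ℕ} (huv : u ≠ v) {A : Finset ℕ} (h1 : v ∈ A) (h2 : u ∉ A) :
    insert v ((mv u v A).erase u) = A := by
  rw [mv_eq_of u v h1 h2, erase_insert (by simp [huv, h2])]  -- erase (insert u (A.erase v)) u
  exact insert_erase h1

lemma mv_ne_imp {u v : ℕ} {A : Finset ℕ} (h : mv u v A ≠ A) : v ∈ A ∧ u ∉ A := by
  by_contra hc
  exact h (mv_eq_of_not u v hc)

lemma comp_card {u v : ℕ} (huv : u ≠ v) (F : Finset (Finset ℕ)) :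
    (comp u v F).card = F.card := by
  unfold comp
  rw [card_union_of_disjoint, card_image_of_injOn]
  · have : F.filter (fun A => mv u v A ∈ F) ∪ F.filter (fun A => mv u v A ∉ F) = F := by
      rw [← filter_or]
      simp [em]
    conv_rhs => rw [← this]
    rw [card_union_of_disjoint]
    · rw [disjoint_left]
      intro A hA hA'
      exact (mem_filter.1 hA').2 (mem_filter.1 hA).2
  · intro A hA B hB hAB
    simp only [coe_filter, Set.mem_setOf_eq] at hA hB
    have hA' : mv u v A ≠ A := fun h => hA.2 (by rw [h]; exact hA.1)
    have hB' : mv u v B ≠ B := fun h => hB.2 (by rw [h]; exact hB.1)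
    obtain ⟨hvA, huA⟩ := mv_ne_imp hA'
    obtain ⟨hvB, huB⟩ := mv_ne_imp hB'
    rw [← mv_invol huv hvA huA, ← mv_invol huv hvB huB, hAB]
  · rw [disjoint_right]
    rintro A hA hA'
    simp only [mem_image, mem_filter] at hA
    obtain ⟨B, ⟨hB, hBm⟩, rfl⟩ := hA
    exact hBm (mem_filter.1 hA').1


lemma comp_unif {u v m k : ℕ} (huv : u < v) {F : Finset (Finset ℕ)} (hF : Unif F m k) :
    Unif (comp u v F) m k := by
  intro A hA
  rcases mem_comp.1 hA with ⟨h1, _⟩ | ⟨B, hB, _, rfl⟩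
  · exact hF A h1
  · obtain ⟨hBr, hBc⟩ := hF B hB
    exact ⟨mv_subset_range huv hBr, by rw [mv_card (Nat.ne_of_lt huv)]; exact hBc⟩

/-- key: compression (applied to both members of a pair) preserves cross-intersection -/
lemma comp_cross {u v : ℕ} (huv : u ≠ v) {P Q : Finset (Finset ℕ)} (h : Cross P Q) :
    Cross (comp u v P) (comp u v Q) := by
  intro X hX Y hY
  rcases mem_comp.1 hX with ⟨hX1, hX2⟩ | ⟨A, hA, hAm, rfl⟩
  · rcases mem_comp.1 hY with ⟨hY1, _⟩ | ⟨B, hB, hBm, rfl⟩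
    · exact h X hX1 Y hY1
    · -- Y = mv B, moved
      have hBmoved : mv u v B ≠ B := fun he => hBm (by rw [he]; exact hB)
      obtain ⟨hvB, huB⟩ := mv_ne_imp hBmoved
      rw [mv_eq_of u v hvB huB]
      by_contra hempty
      rw [not_nonempty_iff_eq_empty] at hempty
      -- X ∩ B ⊆ {v}
      have hXB : X ∩ B ⊆ {v} := by
        intro x hx
        rw [mem_inter] at hx
        by_contra hxv
        rw [mem_singleton] at hxv
        have : x ∈ X ∩ insert u (B.erase v) := by
          rw [mem_inter]
          exact ⟨hx.1, mem_insert_of_mem (mem_erase.2 ⟨hxv, hx.2⟩)⟩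
        rw [hempty] at this
        exact notMem_empty x this
      have hne : (X ∩ B).Nonempty := h X hX1 B hB
      have hvX : v ∈ X := by
        obtain ⟨x, hx⟩ := hne
        have := hXB hx
        rw [mem_singleton] at this
        subst this
        exact (mem_inter.1 hx).1
      have huX : u ∉ X := by
        intro huX
        have : u ∈ X ∩ insert u (B.erase v) := mem_inter.2 ⟨huX, mem_insert_self _ _⟩
        rw [hempty] at this
        exact notMem_empty u this
      -- X was kept, so mv X ∈ P
      have hmvX : mv u v X ∈ P := hX2
      rw [mv_eq_of u v hvX huX] at hmvX
      have := h _ hmvX B hB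
      obtain ⟨y, hy⟩ := this
      rw [mem_inter, mem_insert] at hy
      rcases hy.1 with rfl | hy1
      · exact huB hy.2
      · have hyv : y ≠ v := (mem_erase.1 hy1).1
        have hyX : y ∈ X := mem_of_mem_erase hy1
        have : y ∈ X ∩ B := mem_inter.2 ⟨hyX, hy.2⟩
        have := hXB this
        rw [mem_singleton] at this
        exact hyv this
  · rcases mem_comp.1 hY with ⟨hY1, hY2⟩ | ⟨B, hB, hBm, rfl⟩
    · -- X = mv A moved, Y kept : symmetric
      have hAmoved : mv u v A ≠ A := fun he => hAm (by rw [he]; exact hA)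
      obtain ⟨hvA, huA⟩ := mv_ne_imp hAmoved
      rw [mv_eq_of u v hvA huA]
      by_contra hempty
      rw [not_nonempty_iff_eq_empty] at hempty
      have hYA : Y ∩ A ⊆ {v} := by
        intro x hx
        rw [mem_inter] at hx
        by_contra hxv
        rw [mem_singleton] at hxv
        have : x ∈ insert u (A.erase v) ∩ Y := by
          rw [mem_inter]
          exact ⟨mem_insert_of_mem (mem_erase.2 ⟨hxv, hx.2⟩), hx.1⟩
        rw [hempty] at this
        exact notMem_empty x this
      have hne : (A ∩ Y).Nonempty := h A hA Y hY1
      have hvY : v ∈ Y := by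
        obtain ⟨x, hx⟩ := hne
        rw [mem_inter] at hx
        have := hYA (mem_inter.2 ⟨hx.2, hx.1⟩)
        rw [mem_singleton] at this
        subst this
        exact hx.2
      have huY : u ∉ Y := by
        intro huY
        have : u ∈ insert u (A.erase v) ∩ Y := mem_inter.2 ⟨mem_insert_self _ _, huY⟩
        rw [hempty] at this
        exact notMem_empty u this
      have hmvY : mv u v Y ∈ Q := hY2
      rw [mv_eq_of u v hvY huY] at hmvY
      have := h A hA _ hmvY
      obtain ⟨y, hy⟩ := this
      rw [mem_inter, mem_insert] at hy
      rcases hy.2 with rfl | hy2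
      · exact huA hy.1
      · have hyv : y ≠ v := (mem_erase.1 hy2).1
        have hyY : y ∈ Y := mem_of_mem_erase hy2
        have : y ∈ Y ∩ A := mem_inter.2 ⟨hyY, hy.1⟩
        have := hYA this
        rw [mem_singleton] at this
        exact hyv this
    · -- both moved: u in both
      have hAmoved : mv u v A ≠ A := fun he => hAm (by rw [he]; exact hA)
      have hBmoved : mv u v B ≠ B := fun he => hBm (by rw [he]; exact hB)
      obtain ⟨hvA, huA⟩ := mv_ne_imp hAmoved
      obtain ⟨hvB, huB⟩ := mv_ne_imp hBmoved
      rw [mv_eq_of u v hvA huA, mv_eq_of u v hvB huB]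
      exact ⟨u, mem_inter.2 ⟨mem_insert_self _ _, mem_insert_self _ _⟩⟩

/-- sum-of-elements measure of a family -/
def fmeasure (F : Finset (Finset ℕ)) : ℕ := ∑ A ∈ F, ∑ x ∈ A, x

lemma mv_sum_lt {u v : ℕ} (huv : u < v) {A : Finset ℕ} (h1 : v ∈ A) (h2 : u ∉ A) :
    ∑ x ∈ mv u v A, x < ∑ x ∈ A, x := by
  rw [mv_eq_of u v h1 h2, sum_insert (by simp [h2])]
  have := add_sum_erase A id h1
  simp only [id] at this
  omega

lemma comp_measure_le {u v : ℕ} (huv : u < v) (F : Finset (Finset ℕ)) :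
    fmeasure (comp u v F) ≤ fmeasure F ∧
    (∀ ⦃B⦄, B ∈ F → mv u v B ∉ F → fmeasure (comp u v F) < fmeasure F) := by
  unfold fmeasure comp
  rw [sum_union (by
    rw [disjoint_right]
    rintro A hA hA'
    simp only [mem_image, mem_filter] at hA
    obtain ⟨B, ⟨hB, hBm⟩, rfl⟩ := hA
    exact hBm (mem_filter.1 hA').1)]
  rw [sum_image (by
    intro A hA B hB hAB
    simp only [mem_coe, mem_filter] at hA hB
    have hA' : mv u v A ≠ A := fun h => hA.2 (by rw [h]; exact hA.1)
    have hB' : mv u v B ≠ B := fun h => hB.2 (by rw [h]; exact hB.1)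
    obtain ⟨hvA, huA⟩ := mv_ne_imp hA'
    obtain ⟨hvB, huB⟩ := mv_ne_imp hB'
    rw [← mv_invol (Nat.ne_of_lt huv) hvA huA, ← mv_invol (Nat.ne_of_lt huv) hvB huB, hAB])]
  have hsplit : F.filter (fun A => mv u v A ∈ F) ∪ F.filter (fun A => mv u v A ∉ F) = F := by
    rw [← filter_or]; simp [em]
  have hdisj : Disjoint (F.filter (fun A => mv u v A ∈ F)) (F.filter (fun A => mv u v A ∉ F)) := by
    rw [disjoint_left]
    intro A hA hA'
    exact (mem_filter.1 hA').2 (mem_filter.1 hA).2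
  have hF : ∑ A ∈ F, ∑ x ∈ A, x
      = ∑ A ∈ F.filter (fun A => mv u v A ∈ F), ∑ x ∈ A, x
        + ∑ A ∈ F.filter (fun A => mv u v A ∉ F), ∑ x ∈ A, x := by
    conv_lhs => rw [← hsplit]
    exact sum_union hdisj
  constructor
  · rw [hF]
    refine Nat.add_le_add_left (sum_le_sum ?_) _
    intro A hA
    have hA' := mem_filter.1 hA
    rcases eq_or_ne (mv u v A) A with he | hne
    · rw [he]
    · obtain ⟨hvA, huA⟩ := mv_ne_imp hne
      exact (mv_sum_lt huv hvA huA).le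
  · intro B hB hBm
    rw [hF]
    refine Nat.add_lt_add_left (sum_lt_sum ?_ ⟨B, mem_filter.2 ⟨hB, hBm⟩, ?_⟩) _
    · intro A hA
      rcases eq_or_ne (mv u v A) A with he | hne
      · rw [he]
      · obtain ⟨hvA, huA⟩ := mv_ne_imp hne
        exact (mv_sum_lt huv hvA huA).le
    · have hne : mv u v B ≠ B := fun h => hBm (by rw [h]; exact hB)
      obtain ⟨hvB, huB⟩ := mv_ne_imp hne
      exact mv_sum_lt huv hvB huB


/-! ### counting lemmas -/

/-- a uniform family lies in powersetCard -/
lemma unif_subset_powersetCard {F : Finset (Finset ℕ)} {m k : ℕ} (hF : Unif F m k) :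
    F ⊆ (range m).powersetCard k := by
  intro A hA
  rw [mem_powersetCard]
  exact hF A hA

lemma card_le_choose {F : Finset (Finset ℕ)} {m k : ℕ} (hF : Unif F m k) :
    F.card ≤ m.choose k := by
  have := card_le_card (unif_subset_powersetCard hF)
  rwa [card_powersetCard, card_range] at this

/-- If every member is a k-subset of U meeting W (with W ⊆ U), then
    |F| + C(|U|-|W|, k) ≤ C(|U|, k). -/
lemma card_meets {F : Finset (Finset ℕ)} {U W : Finset ℕ} {k : ℕ} (hWU : W ⊆ U)
    (hF : ∀ A ∈ F, A ⊆ U ∧ A.card = k ∧ (A ∩ W).Nonempty) :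
    F.card + (U.card - W.card).choose k ≤ U.card.choose k := by
  have h1 : F ∪ (U \ W).powersetCard k ⊆ U.powersetCard k := by
    intro A hA
    rcases mem_union.1 hA with hA | hA
    · rw [mem_powersetCard]; exact ⟨(hF A hA).1, (hF A hA).2.1⟩
    · rw [mem_powersetCard] at hA ⊢
      exact ⟨hA.1.trans sdiff_subset, hA.2⟩
  have h2 : Disjoint F ((U \ W).powersetCard k) := by
    rw [disjoint_left]
    intro A hA hA'
    rw [mem_powersetCard] at hA'
    obtain ⟨x, hx⟩ := (hF A hA).2.2
    rw [mem_inter] at hx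
    have := hA'.1 hx.1
    rw [mem_sdiff] at this
    exact this.2 hx.2
  have := card_le_card h1
  rw [card_union_of_disjoint h2, card_powersetCard, card_sdiff_of_subset hWU] at this
  rwa [card_powersetCard] at this

/-- pairing bound: an intersecting family of k-subsets of a 2k-element ground has ≤ half -/
lemma card_pairing {F : Finset (Finset ℕ)} {k : ℕ}
    (hF : Unif F (2 * k) k) (hint : Cross F F) :
    2 * F.card ≤ (2 * k).choose k := by
  set C := F.image (fun A => range (2 * k) \ A) with hC
  have hcard : C.card = F.card := by
    rw [hC]
    apply card_image_of_injOn
    intro A hA B hB hAB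
    have hA' := (hF A hA).1
    have hB' := (hF B hB).1
    simp only at hAB
    have : range (2 * k) \ (range (2 * k) \ A) = range (2 * k) \ (range (2 * k) \ B) := by
      rw [hAB]
    rwa [sdiff_sdiff_right_self, sdiff_sdiff_right_self, inf_eq_right.2 hA',
      inf_eq_right.2 hB'] at this
  have hdisj : Disjoint F C := by
    rw [disjoint_left]
    intro A hA hA'
    rw [hC, mem_image] at hA'
    obtain ⟨B, hB, hBA⟩ := hA'
    obtain ⟨x, hx⟩ := hint A hA B hB
    rw [mem_inter] at hx
    have : x ∈ range (2 * k) \ B := by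
      rw [show range (2*k) \ B = A from hBA]
      exact hx.1
    rw [mem_sdiff] at this
    exact this.2 hx.2
  have hsub : F ∪ C ⊆ (range (2 * k)).powersetCard k := by
    intro A hA
    rcases mem_union.1 hA with hA | hA
    · rw [mem_powersetCard]; exact hF A hA
    · rw [hC, mem_image] at hA
      obtain ⟨B, hB, rfl⟩ := hA
      rw [mem_powersetCard]
      refine ⟨sdiff_subset, ?_⟩
      rw [card_sdiff_of_subset (hF B hB).1, card_range, (hF B hB).2]
      omega
  have := card_le_card hsub
  rw [card_union_of_disjoint hdisj, card_powersetCard, card_range, hcard] at this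
  omega

/-! ### SH lemma: shifted cross-intersecting families intersect in a window -/

lemma SH_aux (a b : ℕ) (P Q : Finset (Finset ℕ)) (hP : Shifted P)
    (hcross : Cross P Q) (hPa : ∀ A ∈ P, A.card = a) (hQb : ∀ B ∈ Q, B.card = b) :
    ∀ s : ℕ, ∀ A ∈ P, ∀ B ∈ Q, (A ∩ B).card = s →
      (A ∩ B ∩ range (a + b - 1)).Nonempty := by
  intro s
  induction s using Nat.strong_induction_on with
  | _ s ih =>
    intro A hA B hB hs
    by_contra hempty
    rw [not_nonempty_iff_eq_empty] at hempty
    obtain ⟨t, ht⟩ := hcross A hA B hB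
    have htr : t ∉ range (a + b - 1) := by
      intro htr
      have : t ∈ A ∩ B ∩ range (a + b - 1) := mem_inter.2 ⟨ht, htr⟩
      rw [hempty] at this
      exact notMem_empty t this
    rw [mem_range, not_lt] at htr
    rw [mem_inter] at ht
    -- find a free slot in the window
    have hAcard : (A ∩ range (a + b - 1)).card ≤ a - 1 := by
      have hsub : A ∩ range (a + b - 1) ⊆ A.erase t := by
        intro x hx
        rw [mem_inter] at hx
        refine mem_erase.2 ⟨?_, hx.1⟩
        rintro rfl
        rw [mem_range] at hx
        omega
      have := card_le_card hsub
      rw [card_erase_of_mem ht.1, hPa A hA] at this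
      exact this
    have hBcard : (B ∩ range (a + b - 1)).card ≤ b - 1 := by
      have hsub : B ∩ range (a + b - 1) ⊆ B.erase t := by
        intro x hx
        rw [mem_inter] at hx
        refine mem_erase.2 ⟨?_, hx.1⟩
        rintro rfl
        rw [mem_range] at hx
        omega
      have := card_le_card hsub
      rw [card_erase_of_mem ht.2, hQb B hB] at this
      exact this
    have ha1 : 1 ≤ a := by rw [← hPa A hA]; exact card_pos.2 ⟨t, ht.1⟩
    have hb1 : 1 ≤ b := by rw [← hQb B hB]; exact card_pos.2 ⟨t, ht.2⟩
    have hslot : (range (a + b - 1) \ (A ∪ B)).Nonempty := by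
      rw [← card_pos]
      have hkey : (range (a + b - 1) \ (A ∪ B)).card + ((A ∪ B) ∩ range (a + b - 1)).card
          = a + b - 1 := by
        have := card_sdiff_add_card_inter (range (a + b - 1)) (A ∪ B)
        rw [card_range] at this
        rw [inter_comm]
        exact this
      have hint2 : ((A ∪ B) ∩ range (a + b - 1)).card ≤ (a - 1) + (b - 1) := by
        have hsub : (A ∪ B) ∩ range (a + b - 1)
            ⊆ (A ∩ range (a + b - 1)) ∪ (B ∩ range (a + b - 1)) := by
          intro x hx
          rw [mem_inter, mem_union] at hx
          rw [mem_union, mem_inter, mem_inter]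
          tauto
        calc ((A ∪ B) ∩ range (a + b - 1)).card
            ≤ ((A ∩ range (a + b - 1)) ∪ (B ∩ range (a + b - 1))).card := card_le_card hsub
          _ ≤ (A ∩ range (a + b - 1)).card + (B ∩ range (a + b - 1)).card := card_union_le _ _
          _ ≤ (a - 1) + (b - 1) := Nat.add_le_add hAcard hBcard
      omega
    obtain ⟨i, hi⟩ := hslot
    rw [mem_sdiff, mem_range, mem_union] at hi
    push_neg at hi
    obtain ⟨hiw, hiA, hiB⟩ := hi
    have hit : i < t := by omega
    have hA' : insert i (A.erase t) ∈ P := hP hit hA ht.1 hiA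
    have hAB' : (insert i (A.erase t)) ∩ B = (A ∩ B).erase t := by
      ext x
      rw [mem_inter, mem_insert, mem_erase, mem_erase, mem_inter]
      constructor
      · rintro ⟨rfl | ⟨hxt, hxA⟩, hxB⟩
        · exact absurd hxB hiB
        · exact ⟨hxt, hxA, hxB⟩
      · rintro ⟨hxt, hxA, hxB⟩
        exact ⟨Or.inr ⟨hxt, hxA⟩, hxB⟩
    have hcard' : ((insert i (A.erase t)) ∩ B).card < s := by
      rw [hAB', card_erase_of_mem (mem_inter.2 ht), hs]
      have : 0 < s := by rw [← hs]; exact card_pos.2 ⟨t, mem_inter.2 ht⟩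
      omega
    have := ih _ hcard' _ hA' B hB rfl
    obtain ⟨y, hy⟩ := this
    rw [hAB'] at hy
    rw [mem_inter, mem_erase, mem_inter] at hy
    have : y ∈ A ∩ B ∩ range (a + b - 1) := by
      rw [mem_inter, mem_inter]
      exact ⟨⟨hy.1.2.1, hy.1.2.2⟩, hy.2⟩
    rw [hempty] at this
    exact notMem_empty y this

/-- SH lemma, usable form -/
lemma SH {a b : ℕ} {P Q : Finset (Finset ℕ)} (hP : Shifted P)
    (hcross : Cross P Q) (hPa : ∀ A ∈ P, A.card = a) (hQb : ∀ B ∈ Q, B.card = b)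
    {A B : Finset ℕ} (hA : A ∈ P) (hB : B ∈ Q) :
    (A ∩ B ∩ range (a + b - 1)).Nonempty :=
  SH_aux a b P Q hP hcross hPa hQb (A ∩ B).card A hA B hB rfl


/-! ### shifted families contain canonical minimal sets -/

/-- a nonempty shifted uniform family contains `range j` -/
lemma range_mem_shifted {F : Finset (Finset ℕ)} {j : ℕ} (hS : Shifted F)
    (hne : F.Nonempty) (hu : ∀ A ∈ F, A.card = j) : range j ∈ F := by
  classical
  obtain ⟨A₀, hA₀, hmin⟩ := F.exists_min_image (fun A => ∑ x ∈ A, x) hne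
  by_cases h : A₀ = range j
  · rwa [← h]
  · exfalso
    have hcard : A₀.card = j := hu A₀ hA₀
    have hnotsub : ¬ A₀ ⊆ range j := by
      intro hsub
      exact h (eq_of_subset_of_card_le hsub (by rw [hcard, card_range]))
    obtain ⟨v, hvA, hvr⟩ := not_subset.1 hnotsub
    have hmiss : (range j \ A₀).Nonempty := by
      rw [← card_pos]
      have h1 : (A₀ ∩ range j).card < j := by
        have hsub : A₀ ∩ range j ⊆ A₀.erase v := by
          intro x hx
          rw [mem_inter] at hx
          exact mem_erase.2 ⟨fun he => hvr (he ▸ hx.2), hx.1⟩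
        have := card_le_card hsub
        rw [card_erase_of_mem hvA, hcard] at this
        have hj : 1 ≤ j := by rw [← hcard]; exact card_pos.2 ⟨v, hvA⟩
        omega
      have := card_sdiff_add_card_inter (range j) A₀
      rw [card_range, inter_comm] at this
      omega
    obtain ⟨u, hu'⟩ := hmiss
    rw [mem_sdiff, mem_range] at hu'
    have huv : u < v := by
      rw [mem_range, not_lt] at hvr
      omega
    have hA' : insert u (A₀.erase v) ∈ F := hS huv hA₀ hvA hu'.2
    have := hmin _ hA'
    rw [sum_insert (by simp [hu'.2])] at this
    have h2 := add_sum_erase A₀ id hvA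
    simp only [id] at h2
    omega

/-- down-closure avoiding 0: a shifted family with a member avoiding 0 contains
    `(range (j+1)).erase 0`. -/
lemma erase0_mem_shifted {F : Finset (Finset ℕ)} {j : ℕ} (hS : Shifted F)
    {B : Finset ℕ} (hB : B ∈ F) (h0 : 0 ∉ B) (hu : ∀ A ∈ F, A.card = j) :
    (range (j + 1)).erase 0 ∈ F := by
  classical
  set G := F.filter (fun A => 0 ∉ A) with hG
  have hBG : B ∈ G := mem_filter.2 ⟨hB, h0⟩
  obtain ⟨A₀, hA₀, hmin⟩ := G.exists_min_image (fun A => ∑ x ∈ A, x) ⟨B, hBG⟩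
  obtain ⟨hA₀F, hA₀0⟩ := mem_filter.1 hA₀
  set T := (range (j + 1)).erase 0 with hT
  have hTcard : T.card = j := by
    rw [hT, card_erase_of_mem (by simp), card_range]
    omega
  by_cases h : A₀ = T
  · rwa [← h]
  · exfalso
    have hcard : A₀.card = j := hu A₀ hA₀F
    have hnotsub : ¬ A₀ ⊆ T := by
      intro hsub
      exact h (eq_of_subset_of_card_le hsub (by rw [hcard, hTcard]))
    obtain ⟨v, hvA, hvr⟩ := not_subset.1 hnotsub
    have hvT : ¬ v < j + 1 := by
      intro hv
      apply hvr
      rw [hT, mem_erase, mem_range]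
      exact ⟨fun h0' => hA₀0 (h0' ▸ hvA), hv⟩
    push_neg at hvT
    have hmiss : (T \ A₀).Nonempty := by
      rw [← card_pos]
      have h1 : (A₀ ∩ T).card < j := by
        have hsub : A₀ ∩ T ⊆ A₀.erase v := by
          intro x hx
          rw [mem_inter] at hx
          exact mem_erase.2 ⟨fun he => hvr (he ▸ hx.2), hx.1⟩
        have := card_le_card hsub
        rw [card_erase_of_mem hvA, hcard] at this
        have hj : 1 ≤ j := by rw [← hcard]; exact card_pos.2 ⟨v, hvA⟩
        omega
      have := card_sdiff_add_card_inter T A₀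
      rw [hTcard, inter_comm] at this
      omega
    obtain ⟨u, hu'⟩ := hmiss
    rw [mem_sdiff, hT, mem_erase, mem_range] at hu'
    have huv : u < v := by omega
    have hA' : insert u (A₀.erase v) ∈ F := hS huv hA₀F hvA hu'.2
    have hA'0 : 0 ∉ insert u (A₀.erase v) := by
      rw [mem_insert]
      rintro (rfl | hx)
      · exact hu'.1.1 rfl
      · exact hA₀0 (mem_of_mem_erase hx)
    have hA'G : insert u (A₀.erase v) ∈ G := mem_filter.2 ⟨hA', hA'0⟩
    have := hmin _ hA'G
    rw [sum_insert (by simp [hu'.2])] at this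
    have h2 := add_sum_erase A₀ id hvA
    simp only [id] at h2
    omega

/-! ### restriction and links -/

/-- sets avoiding a point -/
def restr (F : Finset (Finset ℕ)) (t : ℕ) : Finset (Finset ℕ) := F.filter (fun A => t ∉ A)

/-- links of a point -/
def link (F : Finset (Finset ℕ)) (t : ℕ) : Finset (Finset ℕ) :=
  (F.filter (fun A => t ∈ A)).image (fun A => A.erase t)

lemma card_restr_add_link {F : Finset (Finset ℕ)} {t : ℕ} :
    (restr F t).card + (link F t).card = F.card := by
  unfold restr link
  rw [card_image_of_injOn (by
    intro A hA B hB hAB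
    simp only [mem_coe, mem_filter] at hA hB
    simp only at hAB
    rw [← insert_erase hA.2, ← insert_erase hB.2, hAB])]
  rw [← card_union_of_disjoint (by
    rw [disjoint_left]
    intro A hA hA'
    exact (mem_filter.1 hA).2 (mem_filter.1 hA').2)]
  congr 1
  rw [← filter_or]
  simp [em, or_comm]

lemma mem_link {F : Finset (Finset ℕ)} {t : ℕ} {A : Finset ℕ} :
    A ∈ link F t ↔ t ∉ A ∧ insert t A ∈ F := by
  unfold link
  simp only [mem_image, mem_filter]
  constructor
  · rintro ⟨B, ⟨hB, htB⟩, rfl⟩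
    exact ⟨notMem_erase _ _, by rwa [insert_erase htB]⟩
  · rintro ⟨htA, hins⟩
    exact ⟨insert t A, ⟨hins, mem_insert_self _ _⟩, by rw [erase_insert htA]⟩

lemma restr_unif {F : Finset (Finset ℕ)} {m k t : ℕ} (hF : Unif F m k) (ht : t = m - 1)
    (hm : 1 ≤ m) : Unif (restr F t) (m - 1) k := by
  intro A hA
  obtain ⟨hAF, hAt⟩ := mem_filter.1 hA
  obtain ⟨hAr, hAc⟩ := hF A hAF
  refine ⟨?_, hAc⟩
  intro x hx
  have := hAr hx
  rw [mem_range] at this ⊢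
  rcases Nat.lt_or_ge x (m - 1) with h | h
  · exact h
  · exfalso
    have : x = m - 1 := by omega
    exact hAt (ht ▸ this ▸ hx)

lemma restr_shifted {F : Finset (Finset ℕ)} {m k : ℕ} (hS : Shifted F) (hF : Unif F m k) :
    Shifted (restr F (m - 1)) := by
  intro u v B huv hB hvB huB
  obtain ⟨hBF, hBt⟩ := mem_filter.1 hB
  refine mem_filter.2 ⟨hS huv hBF hvB huB, ?_⟩
  have hvm : v < m - 1 := by
    have := (hF B hBF).1 hvB
    rw [mem_range] at this
    rcases Nat.lt_or_ge v (m-1) with h | h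
    · exact h
    · exfalso; exact hBt (by rwa [show m - 1 = v by omega])
  rw [mem_insert]
  rintro (rfl | hx)
  · omega
  · exact hBt (mem_of_mem_erase hx)

lemma link_unif {F : Finset (Finset ℕ)} {m k : ℕ} (hF : Unif F m k) (hm : 1 ≤ m) (hk : 1 ≤ k) :
    Unif (link F (m - 1)) (m - 1) (k - 1) := by
  intro A hA
  rw [mem_link] at hA
  obtain ⟨htA, hins⟩ := hA
  obtain ⟨hr, hc⟩ := hF _ hins
  constructor
  · intro x hx
    have hxi : x ∈ insert (m-1) A := mem_insert_of_mem hx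
    have := hr hxi
    rw [mem_range] at this ⊢
    rcases Nat.lt_or_ge x (m-1) with h | h
    · exact h
    · exfalso; exact htA (by rwa [show m - 1 = x by omega])
  · rw [card_insert_of_notMem htA] at hc
    omega

lemma link_shifted {F : Finset (Finset ℕ)} {m k : ℕ} (hS : Shifted F) (hF : Unif F m k) :
    Shifted (link F (m - 1)) := by
  intro u v B huv hB hvB huB
  rw [mem_link] at hB ⊢
  obtain ⟨htB, hins⟩ := hB
  have hvm : v < m - 1 := by
    have := (hF _ hins).1 (mem_insert_of_mem hvB)
    rw [mem_range] at this
    rcases Nat.lt_or_ge v (m-1) with h | h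
    · exact h
    · exfalso; exact htB (by rwa [show m - 1 = v by omega])
  have hum : u < m - 1 := by omega
  constructor
  · rw [mem_insert]
    rintro (rfl | hx)
    · omega
    · exact htB (mem_of_mem_erase hx)
  · have : insert u ((insert (m-1) B).erase v) ∈ F := by
      refine hS huv hins (mem_insert_of_mem hvB) ?_
      rw [mem_insert]
      rintro (rfl | hx)
      · omega
      · exact huB hx
    have heq : insert u ((insert (m-1) B).erase v) = insert (m-1) (insert u (B.erase v)) := by
      rw [erase_insert_of_ne (by omega)]
      rw [Finset.insert_comm]
    rwa [heq] at this


lemma cross_mono {P Q P' Q' : Finset (Finset ℕ)} (h : Cross P Q) (hP : P' ⊆ P) (hQ : Q' ⊆ Q) :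
    Cross P' Q' := fun A hA B hB => h A (hP hA) B (hQ hB)

lemma cross_restr {F : Finset (Finset ℕ)} {t : ℕ} (h : Cross F F) :
    Cross (restr F t) (restr F t) := cross_mono h (filter_subset _ _) (filter_subset _ _)

/-- links of the top element are again (cross-)intersecting, via the SH lemma -/
lemma link_xint {F : Finset (Finset ℕ)} {m k : ℕ} (hS : Shifted F) (hx : Cross F F)
    (hF : Unif F m k) (hmk : 2 * k ≤ m) :
    Cross (link F (m - 1)) (link F (m - 1)) := by
  intro A' hA' B' hB'
  rw [mem_link] at hA' hB'
  have hsizes : ∀ A ∈ F, A.card = k := fun A hA => (hF A hA).2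
  have := SH hS hx hsizes hsizes hA'.2 hB'.2
  obtain ⟨y, hy⟩ := this
  rw [mem_inter, mem_inter, mem_range] at hy
  have hyk : y < k + k - 1 := hy.2
  have hym : y ≠ m - 1 := by omega
  obtain ⟨⟨hyA, hyB⟩, -⟩ := hy
  rw [mem_insert] at hyA hyB
  refine ⟨y, mem_inter.2 ⟨?_, ?_⟩⟩
  · rcases hyA with rfl | h
    · omega
    · exact h
  · rcases hyB with rfl | h
    · omega
    · exact h

/-- same for two cross-intersecting families, both shifted on the A-side as needed -/
lemma link_cross {P Q : Finset (Finset ℕ)} {m j : ℕ} (hP : Shifted P)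
    (hx : Cross P Q) (hPu : Unif P m j) (hQu : Unif Q m j) (hmj : 2 * j ≤ m) :
    Cross (link P (m - 1)) (link Q (m - 1)) := by
  intro A' hA' B' hB'
  rw [mem_link] at hA' hB'
  have hsA : ∀ A ∈ P, A.card = j := fun A hA => (hPu A hA).2
  have hsB : ∀ B ∈ Q, B.card = j := fun B hB => (hQu B hB).2
  have := SH hP hx hsA hsB hA'.2 hB'.2
  obtain ⟨y, hy⟩ := this
  rw [mem_inter, mem_inter, mem_range] at hy
  have hyk : y < j + j - 1 := hy.2
  have hym : y ≠ m - 1 := by omega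
  obtain ⟨⟨hyA, hyB⟩, -⟩ := hy
  rw [mem_insert] at hyA hyB
  refine ⟨y, mem_inter.2 ⟨?_, ?_⟩⟩
  · rcases hyA with rfl | h
    · omega
    · exact h
  · rcases hyB with rfl | h
    · omega
    · exact h

/-! ### shifted EKR -/

theorem EKRshifted : ∀ m r : ℕ, ∀ F : Finset (Finset ℕ), Shifted F → Cross F F →
    Unif F m r → 2 * r ≤ m → F.card ≤ (m - 1).choose (r - 1) := by
  intro m
  induction m using Nat.strong_induction_on with
  | _ m ih =>
    intro r F hS hx hF hrm
    match r with
    | 0 =>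
      -- 0-uniform intersecting family is empty
      have : F = ∅ := by
        rw [eq_empty_iff_forall_notMem]
        intro A hA
        have hc := (hF A hA).2
        rw [card_eq_zero] at hc
        obtain ⟨y, hy⟩ := hx A hA A hA
        rw [hc] at hy
        simp at hy
      rw [this]
      simp
    | 1 =>
      -- singletons: all equal
      rcases F.eq_empty_or_nonempty with rfl | ⟨A₀, hA₀⟩
      · simp
      · have : F ⊆ {A₀} := by
          intro B hB
          rw [mem_singleton]
          obtain ⟨y, hy⟩ := hx B hB A₀ hA₀
          rw [mem_inter] at hy
          have h1 := (hF B hB).2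
          have h2 := (hF A₀ hA₀).2
          rw [card_eq_one] at h1 h2
          obtain ⟨b, rfl⟩ := h1
          obtain ⟨a, rfl⟩ := h2
          simp only [mem_singleton] at hy
          rw [show b = a by omega]
        have := card_le_card this
        simpa using this
    | (r + 2) =>
      rcases eq_or_lt_of_le hrm with heq | hlt
      · -- m = 2(r+2): pairing
        have hF' : Unif F (2 * (r + 2)) (r + 2) := by rw [← heq] at hF; exact hF
        have hpair := card_pairing hF' hx
        have hsymm : (2*r+3).choose (r+2) = (2*r+3).choose (r+1) := by
          rw [← Nat.choose_symm (show r+2 ≤ 2*r+3 by omega)]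
          congr 1
          omega
        have hps : (2*r+3+1).choose (r+1+1) = (2*r+3).choose (r+1) + (2*r+3).choose (r+1+1) :=
          Nat.choose_succ_succ _ _
        have h24 : (2 * (r+2)).choose (r+2) = (2*r+3+1).choose (r+1+1) := by
          congr 1 <;> omega
        have hgoal1 : F.card ≤ (2*r+3).choose (r+1) := by
          rw [h24, hps] at hpair
          have : (2*r+3).choose (r+1+1) = (2*r+3).choose (r+1) := by
            rw [show r+1+1 = r+2 from rfl]
            exact hsymm
          omega
        have e1 : m - 1 = 2*r+3 := by omega
        have e2 : r + 2 - 1 = r + 1 := by omega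
        rw [e1, e2]
        exact hgoal1
      · -- m > 2(r+2): split at top
        have hm1 : 1 ≤ m := by omega
        have h0 := ih (m - 1) (by omega) (r + 2) (restr F (m - 1))
          (restr_shifted hS hF) (cross_restr hx) (restr_unif hF rfl hm1) (by omega)
        have h1 := ih (m - 1) (by omega) (r + 1) (link F (m - 1))
          (link_shifted hS hF) (link_xint hS hx hF (by omega))
          (by
            have := link_unif hF hm1 (by omega)
            simpa using this)
          (by omega)
        have hsum := card_restr_add_link (F := F) (t := m - 1)
        have hps : (m-2+1).choose (r+1+1) = (m-2).choose (r+1) + (m-2).choose (r+1+1) :=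
          Nat.choose_succ_succ _ _
        have e0 : m - 1 - 1 = m - 2 := by omega
        have e1 : r + 2 - 1 = r + 1 := by omega
        have e2 : r + 1 - 1 = r := by omega
        rw [e0, e1] at h0
        rw [e0, e2] at h1
        have hps2 : (m-2+1).choose (r+2) = (m-2).choose (r+1) + (m-2).choose (r+2) := by
          rw [show r + 2 = r+1+1 from rfl]
          exact hps
        have e3 : m - 2 + 1 = m - 1 := by omega
        rw [e3] at hps2
        have hpsr : (m-2).choose (r+1) = (m-2).choose r + (m-2).choose (r+1) - (m-2).choose r := by
          omega
        -- pascal on r index: C(m-2, r+1) appears; we need C(m-2,r+1)+C(m-2,r) ≤ C(m-1,r+2)? 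
        rw [e1]
        have hpas : (m-1).choose (r+1) = (m-2).choose r + (m-2).choose (r+1) := by
          have h := Nat.choose_succ_succ (m-2) r
          simp only [Nat.succ_eq_add_one] at h
          rw [e3] at h
          exact h
        omega

/-- Key lemma: a shifted intersecting `r`-uniform family in which every member meets
`range (k+1)` in at least 2 points satisfies `|F| + C(m-k-1, r-1) ≤ C(m-1, r-1)`. -/
theorem LINKB : ∀ m : ℕ, ∀ r k : ℕ, ∀ F : Finset (Finset ℕ), Shifted F → Cross F F →
    Unif F m r → (∀ A ∈ F, 2 ≤ (A ∩ range (k + 1)).card) → 2 * r ≤ m → r + 1 ≤ k →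
    F.card + (m - k - 1).choose (r - 1) ≤ (m - 1).choose (r - 1) := by
  intro m
  induction m using Nat.strong_induction_on with
  | _ m ih =>
    intro r k F hS hx hF hmeet hrm hrk
    rcases Nat.lt_or_ge r 2 with hr1 | hr2
    · -- r ≤ 1 : family must be empty
      have hFe : F = ∅ := by
        rw [eq_empty_iff_forall_notMem]
        intro A hA
        have h1 := (hF A hA).2
        have h2 := hmeet A hA
        have h3 : (A ∩ range (k+1)).card ≤ A.card := card_le_card inter_subset_left
        omega
      rw [hFe]
      simp only [card_empty, zero_add]
      have : r - 1 = 0 := by omega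
      rw [this]
      simp
    · rcases Nat.lt_or_ge m (max (2*r+1) (k+2)) with hsmall | hbig
      · -- base: EKR suffices since the subtracted binomial vanishes
        have h0 : (m - k - 1).choose (r-1) = 0 := by
          apply Nat.choose_eq_zero_of_lt
          rcases Nat.lt_or_ge m (k+2) with h | h
          · omega
          · -- then m ≤ 2r
            have hm2r : m ≤ 2 * r := by
              rcases Nat.lt_or_ge m (2*r+1) with h' | h'
              · omega
              · omega
            omega
        rw [h0, Nat.add_zero]
        exact EKRshifted m r F hS hx hF hrm
      · -- recursive case
        have hbig1 : 2 * r + 1 ≤ m := le_trans (le_max_left _ _) hbig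
        have hbig2 : k + 2 ≤ m := le_trans (le_max_right _ _) hbig
        obtain ⟨r', rfl⟩ : ∃ r', r = r' + 2 := ⟨r - 2, by omega⟩
        have hm1 : 1 ≤ m := by omega
        have h0 := ih (m-1) (by omega) (r'+2) k (restr F (m-1))
          (restr_shifted hS hF) (cross_restr hx) (restr_unif hF rfl hm1)
          (fun A hA => hmeet A (mem_filter.1 hA).1) (by omega) hrk
        have hlinkmeet : ∀ A ∈ link F (m-1), 2 ≤ (A ∩ range (k+1)).card := by
          intro A hA
          rw [mem_link] at hA
          have := hmeet _ hA.2
          have heq : insert (m-1) A ∩ range (k+1) = A ∩ range (k+1) := by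
            ext x
            simp only [mem_inter, mem_insert, mem_range]
            constructor
            · rintro ⟨rfl | hx1, hx2⟩
              · omega
              · exact ⟨hx1, hx2⟩
            · rintro ⟨hx1, hx2⟩
              exact ⟨Or.inr hx1, hx2⟩
          rwa [heq] at this
        have h1 := ih (m-1) (by omega) (r'+1) k (link F (m-1))
          (link_shifted hS hF) (link_xint hS hx hF (by omega))
          (by have := link_unif hF hm1 (by omega); simpa using this)
          hlinkmeet (by omega) (by omega)
        have hsum := card_restr_add_link (F := F) (t := m - 1)
        -- arithmetic
        have e0 : m - 1 - 1 = m - 2 := by omega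
        have e1 : r' + 2 - 1 = r' + 1 := by omega
        have e2 : r' + 1 - 1 = r' := by omega
        have e3 : m - 1 - k - 1 = m - k - 2 := by omega
        rw [e0, e1, e3] at h0
        rw [e0, e2, e3] at h1
        have hpasL : (m - k - 1).choose (r'+1) = (m-k-2).choose r' + (m-k-2).choose (r'+1) := by
          have h := Nat.choose_succ_succ (m-k-2) r'
          simp only [Nat.succ_eq_add_one] at h
          rw [show m - k - 2 + 1 = m - k - 1 by omega] at h
          exact h
        have hpasR : (m - 1).choose (r'+1) = (m-2).choose r' + (m-2).choose (r'+1) := by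
          have h := Nat.choose_succ_succ (m-2) r'
          simp only [Nat.succ_eq_add_one] at h
          rw [show m - 2 + 1 = m - 1 by omega] at h
          exact h
        rw [e1]
        omega


/-- cross pairing bound on ground of size 2j -/
lemma cross_pairing {P Q : Finset (Finset ℕ)} {j : ℕ}
    (hP : Unif P (2 * j) j) (hQ : Unif Q (2 * j) j) (hcross : Cross P Q) :
    P.card + Q.card ≤ (2 * j).choose j := by
  set C := P.image (fun A => range (2 * j) \ A) with hC
  have hcard : C.card = P.card := by
    rw [hC]
    apply card_image_of_injOn
    intro A hA B hB hAB
    have hA' := (hP A hA).1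
    have hB' := (hP B hB).1
    simp only at hAB
    have : range (2 * j) \ (range (2 * j) \ A) = range (2 * j) \ (range (2 * j) \ B) := by
      rw [hAB]
    rwa [sdiff_sdiff_right_self, sdiff_sdiff_right_self, inf_eq_right.2 hA',
      inf_eq_right.2 hB'] at this
  have hdisj : Disjoint Q C := by
    rw [disjoint_left]
    intro B hB hB'
    rw [hC, mem_image] at hB'
    obtain ⟨A, hA, hAB⟩ := hB'
    obtain ⟨x, hx⟩ := hcross A hA B hB
    rw [mem_inter] at hx
    have : x ∈ range (2 * j) \ A := by
      rw [show range (2*j) \ A = B from hAB]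
      exact hx.2
    rw [mem_sdiff] at this
    exact this.2 hx.1
  have hsub : Q ∪ C ⊆ (range (2 * j)).powersetCard j := by
    intro A hA
    rcases mem_union.1 hA with hA | hA
    · rw [mem_powersetCard]; exact hQ A hA
    · rw [hC, mem_image] at hA
      obtain ⟨B, hB, rfl⟩ := hA
      rw [mem_powersetCard]
      refine ⟨sdiff_subset, ?_⟩
      rw [card_sdiff_of_subset (hP B hB).1, card_range, (hP B hB).2]
      omega
  have := card_le_card hsub
  rw [card_union_of_disjoint hdisj, card_powersetCard, card_range, hcard] at this
  omega

/-- Cross-intersecting theorem for *shifted* pairs of j-uniform families. -/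
theorem TeqSh : ∀ M : ℕ, ∀ j : ℕ, ∀ P Q : Finset (Finset ℕ),
    Shifted P → Shifted Q → Unif P M j → Unif Q M j → Cross P Q →
    P.Nonempty → Q.Nonempty → 1 ≤ j → 2 * j ≤ M →
    P.card + Q.card + (M - j).choose j ≤ M.choose j + 1 := by
  intro M
  induction M using Nat.strong_induction_on with
  | _ M ih =>
    intro j P Q hSP hSQ hUP hUQ hcross hPne hQne hj1 hjM
    match j, hj1 with
    | 1, _ =>
      obtain ⟨A₀, hA₀⟩ := hPne
      obtain ⟨B₀, hB₀⟩ := hQne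
      obtain ⟨a, rfl⟩ := card_eq_one.1 (hUP A₀ hA₀).2
      obtain ⟨b, rfl⟩ := card_eq_one.1 (hUQ B₀ hB₀).2
      have hab : a = b := by
        obtain ⟨y, hy⟩ := hcross _ hA₀ _ hB₀
        simp only [mem_inter, mem_singleton] at hy
        omega
      subst hab
      have hPsub : P ⊆ {{a}} := by
        intro A hA
        obtain ⟨c, rfl⟩ := card_eq_one.1 (hUP A hA).2
        obtain ⟨y, hy⟩ := hcross _ hA _ hB₀
        simp only [mem_inter, mem_singleton] at hy
        rw [mem_singleton, show c = a by omega]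
      have hQsub : Q ⊆ {{a}} := by
        intro B hB
        obtain ⟨c, rfl⟩ := card_eq_one.1 (hUQ B hB).2
        obtain ⟨y, hy⟩ := hcross _ hA₀ _ hB
        simp only [mem_inter, mem_singleton] at hy
        rw [mem_singleton, show c = a by omega]
      have h1 := card_le_card hPsub
      have h2 := card_le_card hQsub
      simp only [card_singleton] at h1 h2
      rw [Nat.choose_one_right, Nat.choose_one_right]
      omega
    | (j + 2), _ =>
      set j' := j + 2 with hj'
      rcases eq_or_lt_of_le hjM with heq | hlt
      · -- M = 2j' : pairing
        have hUP' : Unif P (2 * j') j' := by rw [← heq] at hUP; exact hUP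
        have hUQ' : Unif Q (2 * j') j' := by rw [← heq] at hUQ; exact hUQ
        have := cross_pairing hUP' hUQ' hcross
        have he1 : M - j' = j' := by omega
        have he2 : M.choose j' = (2 * j').choose j' := by rw [← heq]
        rw [he1, Nat.choose_self, he2]
        omega
      · -- M > 2j'
        have hM1 : 1 ≤ M := by omega
        -- restrictions
        have hP0S := restr_shifted hSP hUP
        have hQ0S := restr_shifted hSQ hUQ
        have hP0U := restr_unif hUP rfl hM1
        have hQ0U := restr_unif hUQ rfl hM1
        have hP0cross : Cross (restr P (M-1)) (restr Q (M-1)) :=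
          cross_mono hcross (filter_subset _ _) (filter_subset _ _)
        have hrangeP : range j' ∈ P := range_mem_shifted hSP hPne (fun A hA => (hUP A hA).2)
        have hrangeQ : range j' ∈ Q := range_mem_shifted hSQ hQne (fun A hA => (hUQ A hA).2)
        have hP0ne : (restr P (M-1)).Nonempty :=
          ⟨range j', mem_filter.2 ⟨hrangeP, by rw [mem_range]; omega⟩⟩
        have hQ0ne : (restr Q (M-1)).Nonempty :=
          ⟨range j', mem_filter.2 ⟨hrangeQ, by rw [mem_range]; omega⟩⟩
        have h0 := ih (M-1) (by omega) j' (restr P (M-1)) (restr Q (M-1)) hP0S hQ0S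
          hP0U hQ0U hP0cross hP0ne hQ0ne
          (by omega) (by omega)
        -- links
        have hlcross : Cross (link P (M-1)) (link Q (M-1)) :=
          link_cross hSP hcross hUP hUQ (by omega)
        have hlinkbound : (link P (M-1)).card + (link Q (M-1)).card + (M - j' - 1).choose (j' - 1)
            ≤ (M - 1).choose (j' - 1) := by
          rcases (link P (M-1)).eq_empty_or_nonempty with hPe | hPlne
          · -- P-link empty: count Q-links via meeting range j'
            have hQmeet : ∀ B' ∈ link Q (M-1), B' ⊆ range (M-1) ∧ B'.card = j' - 1 ∧
                (B' ∩ range j').Nonempty := by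
              intro B' hB'
              have hB'U : B' ⊆ range (M-1) ∧ B'.card = j' - 1 :=
                link_unif hUQ hM1 (by omega) B' hB'
              refine ⟨hB'U.1, hB'U.2, ?_⟩
              rw [mem_link] at hB'
              obtain ⟨y, hy⟩ := hcross _ hrangeP _ hB'.2
              rw [mem_inter, mem_insert] at hy
              have hyr : y ∈ range j' := hy.1
              rw [mem_range] at hyr
              refine ⟨y, mem_inter.2 ⟨?_, by rw [mem_range]; exact hyr⟩⟩
              rcases hy.2 with rfl | h
              · exfalso; omega
              · exact h
            have := card_meets (W := range j') (U := range (M-1))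
              (by intro x hx; rw [mem_range] at hx ⊢; omega) hQmeet
            rw [card_range, card_range] at this
            rw [hPe, card_empty, Nat.zero_add]
            have he : M - 1 - j' = M - j' - 1 := by omega
            rw [he] at this
            exact this
          · rcases (link Q (M-1)).eq_empty_or_nonempty with hQe | hQlne
            · -- Q-link empty, symmetric
              have hPmeet : ∀ A' ∈ link P (M-1), A' ⊆ range (M-1) ∧ A'.card = j' - 1 ∧
                  (A' ∩ range j').Nonempty := by
                intro A' hA'
                have hA'U : A' ⊆ range (M-1) ∧ A'.card = j' - 1 :=
                  link_unif hUP hM1 (by omega) A' hA'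
                refine ⟨hA'U.1, hA'U.2, ?_⟩
                rw [mem_link] at hA'
                obtain ⟨y, hy⟩ := hcross _ hA'.2 _ hrangeQ
                rw [mem_inter, mem_insert] at hy
                have hyr : y ∈ range j' := hy.2
                rw [mem_range] at hyr
                refine ⟨y, mem_inter.2 ⟨?_, by rw [mem_range]; exact hyr⟩⟩
                rcases hy.1 with rfl | h
                · exfalso; omega
                · exact h
              have := card_meets (W := range j') (U := range (M-1))
                (by intro x hx; rw [mem_range] at hx ⊢; omega) hPmeet
              rw [card_range, card_range] at this
              rw [hQe, card_empty, Nat.add_zero]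
              have he : M - 1 - j' = M - j' - 1 := by omega
              rw [he] at this
              exact this
            · -- both links nonempty: induction at level j'-1
              have hlPS : Shifted (link P (M-1)) := link_shifted hSP hUP
              have hlQS : Shifted (link Q (M-1)) := link_shifted hSQ hUQ
              have hlPU : Unif (link P (M-1)) (M-1) (j'-1) := link_unif hUP hM1 (by omega)
              have hlQU : Unif (link Q (M-1)) (M-1) (j'-1) := link_unif hUQ hM1 (by omega)
              have h1 := ih (M-1) (by omega) (j'-1) (link P (M-1)) (link Q (M-1))
                hlPS hlQS hlPU hlQU hlcross hPlne hQlne (by omega) (by omega)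
              have hstrict : (M - j' - 1).choose (j' - 1) + 1 ≤ (M - j').choose (j' - 1) := by
                have hps : (M-j'-1+1).choose (j'-2+1)
                    = (M-j'-1).choose (j'-2) + (M-j'-1).choose (j'-2+1) :=
                  Nat.choose_succ_succ _ _
                rw [show M-j'-1+1 = M-j' by omega, show j'-2+1 = j'-1 by omega] at hps
                have hpos : 0 < (M-j'-1).choose (j'-2) :=
                  Nat.choose_pos (by omega)
                omega
              have he : M - 1 - (j' - 1) = M - j' := by omega
              rw [he] at h1
              omega
        -- combine
        have hsumP := card_restr_add_link (F := P) (t := M-1)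
        have hsumQ := card_restr_add_link (F := Q) (t := M-1)
        have hpasL : (M - j').choose j' = (M-j'-1).choose (j'-1) + (M-j'-1).choose j' := by
          have h := Nat.choose_succ_succ (M-j'-1) (j'-1)
          simp only [Nat.succ_eq_add_one] at h
          rw [show M-j'-1+1 = M-j' by omega, show j'-1+1 = j' by omega] at h
          exact h
        have hpasR : M.choose j' = (M-1).choose (j'-1) + (M-1).choose j' := by
          have h := Nat.choose_succ_succ (M-1) (j'-1)
          simp only [Nat.succ_eq_add_one] at h
          rw [show M-1+1 = M by omega, show j'-1+1 = j' by omega] at h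
          exact h
        have he0 : M - 1 - j' = M - j' - 1 := by omega
        rw [he0] at h0
        omega


lemma not_shifted_witness {F : Finset (Finset ℕ)} (h : ¬Shifted F) :
    ∃ u v B, u < v ∧ B ∈ F ∧ mv u v B ∉ F := by
  unfold Shifted at h
  push_neg at h
  obtain ⟨u, v, B, huv, hB, hvB, huB, hmv⟩ := h
  exact ⟨u, v, B, huv, hB, by rwa [mv_eq_of u v hvB huB]⟩

/-- Cross-intersecting theorem for arbitrary pairs of j-uniform families
(Frankl–Tokushige / Hilton–Milner cross lemma). -/
theorem Tequal : ∀ μ : ℕ, ∀ N j : ℕ, ∀ P Q : Finset (Finset ℕ),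
    fmeasure P + fmeasure Q ≤ μ →
    Unif P N j → Unif Q N j → Cross P Q → P.Nonempty → Q.Nonempty → 1 ≤ j → 2 * j ≤ N →
    P.card + Q.card + (N - j).choose j ≤ N.choose j + 1 := by
  intro μ
  induction μ using Nat.strong_induction_on with
  | _ μ ih =>
    intro N j P Q hμ hUP hUQ hcross hPne hQne hj hjN
    by_cases hSP : Shifted P
    · by_cases hSQ : Shifted Q
      · exact TeqSh N j P Q hSP hSQ hUP hUQ hcross hPne hQne hj hjN
      · obtain ⟨u, v, B, huv, hB, hmv⟩ := not_shifted_witness hSQ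
        have hmP := comp_measure_le huv P
        have hmQ := comp_measure_le huv Q
        have hlt : fmeasure (comp u v P) + fmeasure (comp u v Q) < μ := by
          have := hmQ.2 hB hmv
          have := hmP.1
          omega
        rw [← comp_card (Nat.ne_of_lt huv) P, ← comp_card (Nat.ne_of_lt huv) Q]
        refine ih (fmeasure (comp u v P) + fmeasure (comp u v Q)) hlt N j
          (comp u v P) (comp u v Q) le_rfl (comp_unif huv hUP) (comp_unif huv hUQ)
          (comp_cross (Nat.ne_of_lt huv) hcross) ?_ ?_ hj hjN
        · rw [← card_pos, comp_card (Nat.ne_of_lt huv)]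
          exact card_pos.2 hPne
        · rw [← card_pos, comp_card (Nat.ne_of_lt huv)]
          exact card_pos.2 hQne
    · obtain ⟨u, v, B, huv, hB, hmv⟩ := not_shifted_witness hSP
      have hmP := comp_measure_le huv P
      have hmQ := comp_measure_le huv Q
      have hlt : fmeasure (comp u v P) + fmeasure (comp u v Q) < μ := by
        have := hmP.2 hB hmv
        have := hmQ.1
        omega
      rw [← comp_card (Nat.ne_of_lt huv) P, ← comp_card (Nat.ne_of_lt huv) Q]
      refine ih (fmeasure (comp u v P) + fmeasure (comp u v Q)) hlt N j
        (comp u v P) (comp u v Q) le_rfl (comp_unif huv hUP) (comp_unif huv hUQ)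
        (comp_cross (Nat.ne_of_lt huv) hcross) ?_ ?_ hj hjN
      · rw [← card_pos, comp_card (Nat.ne_of_lt huv)]
        exact card_pos.2 hPne
      · rw [← card_pos, comp_card (Nat.ne_of_lt huv)]
        exact card_pos.2 hQne

/-! ### relabelling to an initial segment -/

/-- transfer a cross-intersecting pair of uniform families on an arbitrary ground set
to `range S.card` -/
lemma relabel {S : Finset ℕ} {P Q : Finset (Finset ℕ)} {j : ℕ}
    (hP : ∀ A ∈ P, A ⊆ S ∧ A.card = j) (hQ : ∀ B ∈ Q, B ⊆ S ∧ B.card = j)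
    (hcross : Cross P Q) :
    ∃ P' Q' : Finset (Finset ℕ), P'.card = P.card ∧ Q'.card = Q.card ∧
      Unif P' S.card j ∧ Unif Q' S.card j ∧ Cross P' Q' ∧
      (P.Nonempty → P'.Nonempty) ∧ (Q.Nonempty → Q'.Nonempty) := by
  classical
  set f : ℕ → ℕ := fun x => if h : x ∈ S then ((S.orderIsoOfFin rfl).symm ⟨x, h⟩ : Fin S.card).val else 0 with hf
  have hinj : Set.InjOn f S := by
    intro a ha b hb hab
    rw [hf] at hab
    simp only at hab
    rw [dif_pos (show a ∈ S from ha), dif_pos (show b ∈ S from hb)] at hab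
    have h2 : (S.orderIsoOfFin rfl).symm ⟨a, ha⟩ = (S.orderIsoOfFin rfl).symm ⟨b, hb⟩ :=
      Fin.val_injective hab
    
    have := (S.orderIsoOfFin rfl).symm.injective h2
    exact Subtype.mk_eq_mk.1 this
  have hfr : ∀ x ∈ S, f x < S.card := by
    intro x hx
    rw [hf]
    simp only [hx, dif_pos]
    exact Fin.is_lt _
  have himg_inj : ∀ A B : Finset ℕ, A ⊆ S → B ⊆ S → A.image f = B.image f → A = B := by
    intro A B hA hB hAB
    ext x
    constructor
    · intro hx
      have : f x ∈ B.image f := by rw [← hAB]; exact mem_image_of_mem f hx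
      rw [mem_image] at this
      obtain ⟨y, hy, hyx⟩ := this
      have := hinj (hB hy) (hA hx) hyx
      rwa [← this]
    · intro hx
      have : f x ∈ A.image f := by rw [hAB]; exact mem_image_of_mem f hx
      rw [mem_image] at this
      obtain ⟨y, hy, hyx⟩ := this
      have := hinj (hA hy) (hB hx) hyx
      rwa [← this]
  refine ⟨P.image (fun A => A.image f), Q.image (fun A => A.image f), ?_, ?_, ?_, ?_, ?_, ?_, ?_⟩
  · apply card_image_of_injOn
    intro A hA B hB hAB
    simp only at hAB
    exact himg_inj A B (hP A hA).1 (hP B hB).1 hAB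
  · apply card_image_of_injOn
    intro A hA B hB hAB
    simp only at hAB
    exact himg_inj A B (hQ A hA).1 (hQ B hB).1 hAB
  · intro A' hA'
    rw [mem_image] at hA'
    obtain ⟨A, hA, rfl⟩ := hA'
    constructor
    · intro x hx
      rw [mem_image] at hx
      obtain ⟨y, hy, rfl⟩ := hx
      rw [mem_range]
      exact hfr y ((hP A hA).1 hy)
    · rw [card_image_of_injOn (hinj.mono (hP A hA).1), (hP A hA).2]
  · intro A' hA'
    rw [mem_image] at hA'
    obtain ⟨A, hA, rfl⟩ := hA'
    constructor
    · intro x hx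
      rw [mem_image] at hx
      obtain ⟨y, hy, rfl⟩ := hx
      rw [mem_range]
      exact hfr y ((hQ A hA).1 hy)
    · rw [card_image_of_injOn (hinj.mono (hQ A hA).1), (hQ A hA).2]
  · intro A' hA' B' hB'
    rw [mem_image] at hA' hB'
    obtain ⟨A, hA, rfl⟩ := hA'
    obtain ⟨B, hB, rfl⟩ := hB'
    obtain ⟨y, hy⟩ := hcross A hA B hB
    rw [mem_inter] at hy
    exact ⟨f y, mem_inter.2 ⟨mem_image_of_mem f hy.1, mem_image_of_mem f hy.2⟩⟩
  · rintro ⟨A, hA⟩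
    exact ⟨A.image f, mem_image_of_mem _ hA⟩
  · rintro ⟨A, hA⟩
    exact ⟨A.image f, mem_image_of_mem _ hA⟩


/-- generic counting: family of t-subsets of U -/
lemma card_le_choose_of {F : Finset (Finset ℕ)} {U : Finset ℕ} {t : ℕ}
    (h : ∀ A ∈ F, A ⊆ U ∧ A.card = t) : F.card ≤ U.card.choose t := by
  have hsub : F ⊆ U.powersetCard t := by
    intro A hA
    rw [mem_powersetCard]
    exact h A hA
  have := card_le_card hsub
  rwa [card_powersetCard] at this

/-- The cover-pair case: every member meets {p,q}. -/
theorem coverpair (n k p q : ℕ) (F : Finset (Finset ℕ)) (hk : 2 ≤ k) (hn : 2 * k ≤ n)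
    (hU : Unif F n k) (hx : Cross F F) (hnt : Nontriv F n) (hpq : p ≠ q)
    (hp : p < n) (hq : q < n) (hcover : ∀ A ∈ F, p ∈ A ∨ q ∈ A) :
    F.card + (n - k - 1).choose (k - 1) ≤ (n - 1).choose (k - 1) + 1 := by
  classical
  set Fpq := F.filter (fun A => p ∈ A ∧ q ∈ A) with hFpq
  set Fp := F.filter (fun A => p ∈ A ∧ q ∉ A) with hFp
  set Fq := F.filter (fun A => p ∉ A ∧ q ∈ A) with hFq
  have hsplit : F.card = Fpq.card + Fp.card + Fq.card := by
    rw [hFpq, hFp, hFq]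
    rw [← card_union_of_disjoint (by
      rw [disjoint_left]
      intro A hA hA'
      exact (mem_filter.1 hA').2.2 (mem_filter.1 hA).2.2), ← card_union_of_disjoint (by
      rw [disjoint_left]
      intro A hA hA'
      rcases mem_union.1 hA with h | h
      · exact (mem_filter.1 hA').2.1 (mem_filter.1 h).2.1
      · exact (mem_filter.1 hA').2.1 (mem_filter.1 h).2.1)]
    congr 1
    ext A
    simp only [mem_union, mem_filter]
    constructor
    · intro hA
      rcases hcover A hA with h | h
      · by_cases hqA : q ∈ A
        · exact Or.inl (Or.inl ⟨hA, h, hqA⟩)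
        · exact Or.inl (Or.inr ⟨hA, h, hqA⟩)
      · by_cases hpA : p ∈ A
        · exact Or.inl (Or.inl ⟨hA, hpA, h⟩)
        · exact Or.inr ⟨hA, hpA, h⟩
    · rintro ((⟨h, -⟩ | ⟨h, -⟩) | ⟨h, -⟩) <;> exact h
  set S := ((range n).erase p).erase q with hS
  have hScard : S.card = n - 2 := by
    rw [hS, card_erase_of_mem (mem_erase.2 ⟨Ne.symm hpq, by rwa [mem_range]⟩),
      card_erase_of_mem (by rwa [mem_range]), card_range]
    omega
  -- bound Fpq
  have hpqbound : Fpq.card ≤ (n-2).choose (k-2) := by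
    have himg : Fpq.card = (Fpq.image (fun A => (A.erase p).erase q)).card := by
      rw [card_image_of_injOn]
      intro A hA B hB hAB
      simp only [mem_coe, hFpq, mem_filter] at hA hB
      simp only at hAB
      have : insert p (insert q ((A.erase p).erase q)) = insert p (insert q ((B.erase p).erase q)) := by
        rw [hAB]
      rwa [insert_erase (mem_erase.2 ⟨Ne.symm hpq, hA.2.2⟩), insert_erase hA.2.1,
        insert_erase (mem_erase.2 ⟨Ne.symm hpq, hB.2.2⟩), insert_erase hB.2.1] at this
    rw [himg, ← hScard]
    apply card_le_choose_of
    intro A' hA'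
    rw [mem_image] at hA'
    obtain ⟨A, hA, rfl⟩ := hA'
    simp only [hFpq, mem_filter] at hA
    constructor
    · intro y hy
      rw [mem_erase] at hy
      rw [hS, mem_erase, mem_erase]
      exact ⟨hy.1, (mem_erase.1 hy.2).1, (hU A hA.1).1 (mem_of_mem_erase hy.2)⟩
    · rw [card_erase_of_mem (mem_erase.2 ⟨Ne.symm hpq, hA.2.2⟩), card_erase_of_mem hA.2.1,
        (hU A hA.1).2]
      omega
  -- the two link families
  set P' := Fp.image (fun A => A.erase p) with hP'
  set Q' := Fq.image (fun A => A.erase q) with hQ'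
  have hP'card : P'.card = Fp.card := by
    rw [hP']
    apply card_image_of_injOn
    intro A hA B hB hAB
    simp only [mem_coe, hFp, mem_filter] at hA hB
    simp only at hAB
    have : insert p (A.erase p) = insert p (B.erase p) := by rw [hAB]
    rwa [insert_erase hA.2.1, insert_erase hB.2.1] at this
  have hQ'card : Q'.card = Fq.card := by
    rw [hQ']
    apply card_image_of_injOn
    intro A hA B hB hAB
    simp only [mem_coe, hFq, mem_filter] at hA hB
    simp only at hAB
    have : insert q (A.erase q) = insert q (B.erase q) := by rw [hAB]
    rwa [insert_erase hA.2.2, insert_erase hB.2.2] at this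
  have hP'unif : ∀ A' ∈ P', A' ⊆ S ∧ A'.card = k - 1 := by
    intro A' hA'
    rw [hP', mem_image] at hA'
    obtain ⟨A, hA, rfl⟩ := hA'
    simp only [hFp, mem_filter] at hA
    constructor
    · intro y hy
      rw [mem_erase] at hy
      rw [hS, mem_erase, mem_erase]
      refine ⟨?_, hy.1, (hU A hA.1).1 hy.2⟩
      intro hyq
      exact hA.2.2 (hyq ▸ hy.2)
    · rw [card_erase_of_mem hA.2.1, (hU A hA.1).2]
  have hQ'unif : ∀ B' ∈ Q', B' ⊆ S ∧ B'.card = k - 1 := by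
    intro B' hB'
    rw [hQ', mem_image] at hB'
    obtain ⟨B, hB, rfl⟩ := hB'
    simp only [hFq, mem_filter] at hB
    constructor
    · intro y hy
      rw [mem_erase] at hy
      rw [hS, mem_erase, mem_erase]
      refine ⟨hy.1, ?_, (hU B hB.1).1 hy.2⟩
      intro hyp
      exact hB.2.1 (hyp ▸ hy.2)
    · rw [card_erase_of_mem hB.2.2, (hU B hB.1).2]
  have hP'Q'cross : Cross P' Q' := by
    intro A' hA' B' hB'
    rw [hP', mem_image] at hA'
    rw [hQ', mem_image] at hB'
    obtain ⟨A, hA, rfl⟩ := hA'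
    obtain ⟨B, hB, rfl⟩ := hB'
    simp only [hFp, mem_filter] at hA
    simp only [hFq, mem_filter] at hB
    obtain ⟨y, hy⟩ := hx A hA.1 B hB.1
    rw [mem_inter] at hy
    refine ⟨y, mem_inter.2 ⟨mem_erase.2 ⟨?_, hy.1⟩, mem_erase.2 ⟨?_, hy.2⟩⟩⟩
    · rintro rfl; exact hB.2.1 hy.2
    · rintro rfl; exact hA.2.2 hy.1
  have hPne : Fp.Nonempty := by
    by_contra hne
    rw [not_nonempty_iff_eq_empty] at hne
    obtain ⟨A, hA, hqA⟩ := hnt q hq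
    rcases hcover A hA with h | h
    · have : A ∈ Fp := by
        rw [hFp, mem_filter]
        exact ⟨hA, h, hqA⟩
      rw [hne] at this
      exact notMem_empty _ this
    · exact hqA h
  have hQne : Fq.Nonempty := by
    by_contra hne
    rw [not_nonempty_iff_eq_empty] at hne
    obtain ⟨A, hA, hpA⟩ := hnt p hp
    rcases hcover A hA with h | h
    · exact hpA h
    · have : A ∈ Fq := by
        rw [hFq, mem_filter]
        exact ⟨hA, hpA, h⟩
      rw [hne] at this
      exact notMem_empty _ this
  have hP'ne : P'.Nonempty := by
    obtain ⟨A, hA⟩ := hPne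
    exact ⟨A.erase p, by rw [hP']; exact mem_image_of_mem _ hA⟩
  have hQ'ne : Q'.Nonempty := by
    obtain ⟨B, hB⟩ := hQne
    exact ⟨B.erase q, by rw [hQ']; exact mem_image_of_mem _ hB⟩
  -- relabel and apply Tequal
  obtain ⟨P'', Q'', hPc, hQc, hPu, hQu, hcr, hPn, hQn⟩ := relabel hP'unif hQ'unif hP'Q'cross
  have hT := Tequal (fmeasure P'' + fmeasure Q'') S.card (k-1) P'' Q'' le_rfl
    hPu hQu hcr (hPn hP'ne) (hQn hQ'ne) (by omega) (by rw [hScard]; omega)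
  rw [hScard] at hT
  rw [hPc, hP'card, hQc, hQ'card] at hT
  have he1 : n - 2 - (k - 1) = n - k - 1 := by omega
  rw [he1] at hT
  -- combine
  have hpasR : (n-1).choose (k-1) = (n-2).choose (k-2) + (n-2).choose (k-1) := by
    have h := Nat.choose_succ_succ (n-2) (k-2)
    simp only [Nat.succ_eq_add_one] at h
    rw [show n-2+1 = n-1 by omega, show k-2+1 = k-1 by omega] at h
    exact h
  omega


/-- In a shifted family with a member avoiding 0, all the k-subsets of range (k+1) belong
to the family. -/
lemma clique_mem {F : Finset (Finset ℕ)} {k : ℕ} (hS : Shifted F) (hne : F.Nonempty)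
    (hu : ∀ A ∈ F, A.card = k) (hnt : ∃ B ∈ F, 0 ∉ B) (hk : 1 ≤ k) :
    ∀ i ≤ k, (range (k+1)).erase i ∈ F := by
  obtain ⟨B, hB, hB0⟩ := hnt
  have hT : (range (k+1)).erase 0 ∈ F := erase0_mem_shifted hS hB hB0 hu
  have hrange : range k ∈ F := range_mem_shifted hS hne hu
  intro i hi
  rcases Nat.eq_zero_or_pos i with rfl | hi0
  · exact hT
  · rcases eq_or_lt_of_le hi with heq | hik
    · -- i = k : erase k of range (k+1) = range k
      rw [heq]
      have : (range (k+1)).erase k = range k := by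
        ext x
        rw [mem_erase, mem_range, mem_range]
        omega
      rwa [this]
    · -- 0 < i < k : down-move i → 0 from T
      have hiT : i ∈ (range (k+1)).erase 0 := by
        rw [mem_erase, mem_range]
        omega
      have h0T : 0 ∉ (range (k+1)).erase 0 := notMem_erase _ _
      have := hS hi0 hT hiT h0T
      have heq : insert 0 (((range (k+1)).erase 0).erase i) = (range (k+1)).erase i := by
        ext x
        simp only [mem_insert, mem_erase, mem_range]
        constructor
        · rintro (rfl | ⟨hxi, hx0, hxr⟩)
          · constructor
            · omega
            · omega
          · exact ⟨hxi, hxr⟩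
        · rintro ⟨hxi, hxr⟩
          rcases Nat.eq_zero_or_pos x with rfl | hx0
          · exact Or.inl rfl
          · exact Or.inr ⟨hxi, by omega, hxr⟩
      rwa [heq] at this

/-- Hilton–Milner theorem for shifted families. -/
theorem HMshifted : ∀ n : ℕ, ∀ k : ℕ, ∀ F : Finset (Finset ℕ),
    2 ≤ k → 2 * k ≤ n → Shifted F → Cross F F → Unif F n k → Nontriv F n →
    F.card + (n - k - 1).choose (k - 1) ≤ (n - 1).choose (k - 1) + 1 := by
  intro n
  induction n using Nat.strong_induction_on with
  | _ n ih =>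
    intro k F hk hkn hS hx hU hnt
    rcases eq_or_lt_of_le hkn with heq | hlt
    · -- n = 2k : pairing (EKR bound suffices)
      have hU' : Unif F (2*k) k := by rw [← heq] at hU; exact hU
      have hpair := card_pairing hU' hx
      have hsymm : (2*k-1).choose (k-1) = (2*k-1).choose k := by
        rw [← Nat.choose_symm (show k ≤ 2*k-1 by omega)]
        congr 1
        omega
      have hps : (2*k-1+1).choose (k-1+1) = (2*k-1).choose (k-1) + (2*k-1).choose (k-1+1) :=
        Nat.choose_succ_succ _ _
      rw [show 2*k-1+1 = 2*k by omega, show k-1+1 = k by omega] at hps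
      have hFb : F.card ≤ (2*k-1).choose (k-1) := by omega
      have he1 : n - k - 1 = k - 1 := by omega
      have he2 : n - 1 = 2*k - 1 := by omega
      rw [he1, he2, Nat.choose_self]
      omega
    · -- n > 2k : split at top element n-1
      have hn1 : 1 ≤ n := by omega
      have hGs : Shifted (link F (n-1)) := link_shifted hS hU
      have hGx : Cross (link F (n-1)) (link F (n-1)) := link_xint hS hx hU (by omega)
      have hGu : Unif (link F (n-1)) (n-1) (k-1) := link_unif hU hn1 (by omega)
      have hsum := card_restr_add_link (F := F) (t := n-1)
      by_cases hnt0 : Nontriv (restr F (n-1)) (n-1)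
      · -- main case
        have h0 := ih (n-1) (by omega) k (restr F (n-1)) hk (by omega)
          (restr_shifted hS hU) (cross_restr hx) (restr_unif hU rfl hn1) hnt0
        -- the k-subsets of range (k+1) are all in restr F (n-1)
        have hF0ne : (restr F (n-1)).Nonempty := by
          obtain ⟨A, hA, -⟩ := hnt0 0 (by omega)
          exact ⟨A, hA⟩
        have hF0u : ∀ A ∈ restr F (n-1), A.card = k :=
          fun A hA => ((restr_unif hU rfl hn1) A hA).2
        have hcliq : ∀ i ≤ k, (range (k+1)).erase i ∈ restr F (n-1) := by
          apply clique_mem (restr_shifted hS hU) hF0ne hF0u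
          · obtain ⟨B, hB, hB0⟩ := hnt0 0 (by omega)
            exact ⟨B, hB, hB0⟩
          · omega
        -- every link member meets range (k+1) in ≥ 2 points
        have hmeet : ∀ A' ∈ link F (n-1), 2 ≤ (A' ∩ range (k+1)).card := by
          intro A' hA'
          by_contra hcon
          push_neg at hcon
          have hsub : ∃ i ≤ k, A' ∩ range (k+1) ⊆ {i} := by
            rcases Nat.lt_or_ge (A' ∩ range (k+1)).card 1 with h | h
            · refine ⟨0, by omega, ?_⟩
              have : A' ∩ range (k+1) = ∅ := card_eq_zero.1 (by omega)
              rw [this]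
              exact empty_subset _
            · have : (A' ∩ range (k+1)).card = 1 := by omega
              obtain ⟨i, hi⟩ := card_eq_one.1 this
              have hik : i ≤ k := by
                have : i ∈ A' ∩ range (k+1) := hi ▸ mem_singleton_self i
                rw [mem_inter, mem_range] at this
                omega
              exact ⟨i, hik, hi ▸ subset_rfl⟩
          obtain ⟨i, hik, hisub⟩ := hsub
          have hBi : (range (k+1)).erase i ∈ F := (mem_filter.1 (hcliq i hik)).1
          rw [mem_link] at hA'
          obtain ⟨y, hy⟩ := hx _ hA'.2 _ hBi
          rw [mem_inter, mem_insert] at hy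
          have hyk : y ∈ (range (k+1)).erase i := hy.2
          rw [mem_erase, mem_range] at hyk
          have hyA' : y ∈ A' := by
            rcases hy.1 with rfl | h
            · omega
            · exact h
          have : y ∈ A' ∩ range (k+1) := mem_inter.2 ⟨hyA', by rw [mem_range]; omega⟩
          have := hisub this
          rw [mem_singleton] at this
          exact hyk.1 this
        have h1 := LINKB (n-1) (k-1) k (link F (n-1)) hGs hGx hGu hmeet (by omega) (by omega)
        -- arithmetic
        have e0 : n - 1 - 1 = n - 2 := by omega
        have e1 : n - 1 - k - 1 = n - k - 2 := by omega
        rw [e0, e1] at h0 h1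
        have hpasL : (n-k-1).choose (k-1) = (n-k-2).choose (k-2) + (n-k-2).choose (k-1) := by
          have h := Nat.choose_succ_succ (n-k-2) (k-2)
          simp only [Nat.succ_eq_add_one] at h
          rw [show n-k-2+1 = n-k-1 by omega, show k-2+1 = k-1 by omega] at h
          exact h
        have hpasR : (n-1).choose (k-1) = (n-2).choose (k-2) + (n-2).choose (k-1) := by
          have h := Nat.choose_succ_succ (n-2) (k-2)
          simp only [Nat.succ_eq_add_one] at h
          rw [show n-2+1 = n-1 by omega, show k-2+1 = k-1 by omega] at h
          exact h
        have e2 : k - 1 - 1 = k - 2 := by omega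
        rw [e2] at h1
        omega
      · -- restr F is trivial: its members share a common point x
        rw [Nontriv] at hnt0
        push_neg at hnt0
        obtain ⟨x, hxn, hxall⟩ := hnt0
        obtain ⟨Astar, hAstar, hxA⟩ := hnt x (by omega)
        have hAtop : n - 1 ∈ Astar := by
          by_contra htop
          have : Astar ∈ restr F (n-1) := mem_filter.2 ⟨hAstar, htop⟩
          exact hxA (hxall Astar this)
        set A' := Astar.erase (n-1) with hA'
        have hA'sub : A' ⊆ (range (n-1)).erase x := by
          intro y hy
          rw [hA', mem_erase] at hy
          rw [mem_erase, mem_range]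
          have := (hU Astar hAstar).1 hy.2
          rw [mem_range] at this
          refine ⟨?_, by omega⟩
          rintro rfl
          exact hxA hy.2
        have hA'card : A'.card = k - 1 := by
          rw [hA', card_erase_of_mem hAtop, (hU Astar hAstar).2]
        -- count restr F (n-1): all members contain x and meet A'
        have hF0bound : (restr F (n-1)).card + (n-k-1).choose (k-1) ≤ (n-2).choose (k-1) := by
          have himg : (restr F (n-1)).card
              = ((restr F (n-1)).image (fun B => B.erase x)).card := by
            rw [card_image_of_injOn]
            intro B1 h1 B2 h2 h12
            simp only at h12
            have e1 : insert x (B1.erase x) = insert x (B2.erase x) := by rw [h12]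
            rwa [insert_erase (hxall B1 (by simpa using h1)),
              insert_erase (hxall B2 (by simpa using h2))] at e1
          rw [himg]
          have hmeets := card_meets (k := k - 1) (F := (restr F (n-1)).image (fun B => B.erase x))
            (U := (range (n-1)).erase x) (W := A') hA'sub ?_
          · have hUc : ((range (n-1)).erase x).card = n - 2 := by
              rw [card_erase_of_mem (by rw [mem_range]; omega), card_range]
              omega
            rw [hUc, hA'card] at hmeets
            rw [show n - 2 - (k-1) = n - k - 1 by omega] at hmeets
            exact hmeets
          · intro B' hB'
            rw [mem_image] at hB'
            obtain ⟨B, hB, rfl⟩ := hB'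
            have hBF := (mem_filter.1 hB).1
            have hBtop := (mem_filter.1 hB).2
            have hxB := hxall B hB
            refine ⟨?_, ?_, ?_⟩
            · intro y hy
              rw [mem_erase] at hy
              rw [mem_erase, mem_range]
              have := (hU B hBF).1 hy.2
              rw [mem_range] at this
              refine ⟨hy.1, ?_⟩
              rcases Nat.lt_or_ge y (n-1) with h | h
              · exact h
              · exfalso
                exact hBtop (by rw [show n-1 = y by omega]; exact hy.2)
            · rw [card_erase_of_mem hxB, (hU B hBF).2]
            · obtain ⟨y, hy⟩ := hx B hBF Astar hAstar
              rw [mem_inter] at hy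
              have hyA' : y ∈ A' := by
                rw [hA', mem_erase]
                refine ⟨?_, hy.2⟩
                rintro rfl
                exact hBtop hy.1
              refine ⟨y, mem_inter.2 ⟨mem_erase.2 ⟨?_, hy.1⟩, hyA'⟩⟩
              rintro rfl
              exact hxA hy.2
        have h1 := EKRshifted (n-1) (k-1) (link F (n-1)) hGs hGx hGu (by omega)
        have e0 : n - 1 - 1 = n - 2 := by omega
        have e2 : k - 1 - 1 = k - 2 := by omega
        rw [e0, e2] at h1
        have hpasR : (n-1).choose (k-1) = (n-2).choose (k-2) + (n-2).choose (k-1) := by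
          have h := Nat.choose_succ_succ (n-2) (k-2)
          simp only [Nat.succ_eq_add_one] at h
          rw [show n-2+1 = n-1 by omega, show k-2+1 = k-1 by omega] at h
          exact h
        omega


/-- Hilton–Milner on ℕ-ground, by compression. -/
theorem HMnat : ∀ μ : ℕ, ∀ n k : ℕ, ∀ F : Finset (Finset ℕ), fmeasure F ≤ μ →
    2 ≤ k → 2 * k ≤ n → Unif F n k → Cross F F → Nontriv F n →
    F.card + (n - k - 1).choose (k - 1) ≤ (n - 1).choose (k - 1) + 1 := by
  intro μ
  induction μ using Nat.strong_induction_on with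
  | _ μ ih =>
    intro n k F hμ hk hkn hU hx hnt
    by_cases hS : Shifted F
    · exact HMshifted n k F hk hkn hS hx hU hnt
    · obtain ⟨u, v, B, huv, hB, hmv⟩ := not_shifted_witness hS
      have hm := comp_measure_le huv F
      have hlt : fmeasure (comp u v F) < μ := lt_of_lt_of_le (hm.2 hB hmv) hμ
      by_cases hnt' : Nontriv (comp u v F) n
      · have := ih (fmeasure (comp u v F)) hlt n k (comp u v F) le_rfl hk hkn
          (comp_unif huv hU) (comp_cross (Nat.ne_of_lt huv) hx) hnt'
        rwa [comp_card (Nat.ne_of_lt huv)] at this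
      · -- compression became a star: every member of comp shares w; cover pair {w, v}
        rw [Nontriv] at hnt'
        push_neg at hnt'
        obtain ⟨w, hwn, hwall⟩ := hnt'
        -- the moved set witnesses w ≠ v
        have hmvB : mv u v B ∈ comp u v F :=
          mem_comp.2 (Or.inr ⟨B, hB, hmv, rfl⟩)
        have hBmoved : mv u v B ≠ B := fun h => hmv (by rw [h]; exact hB)
        obtain ⟨hvB, huB⟩ := mv_ne_imp hBmoved
        have hwmv : w ∈ mv u v B := hwall _ hmvB
        have hwv : w ≠ v := by
          intro hweq
          rw [mv_eq_of u v hvB huB, mem_insert] at hwmv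
          rcases hwmv with h | h
          · omega
          · exact (mem_erase.1 h).1 hweq
        have hvn : v < n := by
          have := (hU B hB).1 hvB
          rwa [mem_range] at this
        -- every member of F meets {w, v}
        have hcover : ∀ A ∈ F, w ∈ A ∨ v ∈ A := by
          intro A hA
          by_cases hmvA : mv u v A ∈ F
          · have : A ∈ comp u v F := mem_comp.2 (Or.inl ⟨hA, hmvA⟩)
            exact Or.inl (hwall _ this)
          · have hAmoved : mv u v A ≠ A := fun h => hmvA (by rw [h]; exact hA)
            obtain ⟨hvA, huA⟩ := mv_ne_imp hAmoved
            have : mv u v A ∈ comp u v F := mem_comp.2 (Or.inr ⟨A, hA, hmvA, rfl⟩)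
            have hwA := hwall _ this
            rw [mv_eq_of u v hvA huA, mem_insert] at hwA
            rcases hwA with rfl | h
            · exact Or.inr hvA
            · exact Or.inl (mem_of_mem_erase h)
        exact coverpair n k w v F hk hkn hU hx hnt hwv (by omega) hvn hcover

end HMproof

open HMproof in
/-- Hilton–Milner: a non-trivially intersecting `k`-uniform family on `[n]`, `n ≥ 2k`,
has size at most `C(n-1,k-1) - C(n-k-1,k-1) + 1`. -/
theorem hilton_milner (n k : ℕ) (hnk : 2 * k ≤ n)
    (F : Finset (Finset (Fin n)))
    (huniform : ∀ A ∈ F, A.card = k)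
    (hint : ∀ A ∈ F, ∀ B ∈ F, (A ∩ B).Nonempty)
    (hnotstar : ¬ ∃ x : Fin n, ∀ A ∈ F, x ∈ A) :
    F.card ≤ (n - 1).choose (k - 1) - (n - k - 1).choose (k - 1) + 1 := by
  classical
  match k, hnk with
  | 0, _ =>
    -- F must be empty
    have hFe : F = ∅ := by
      rw [eq_empty_iff_forall_notMem]
      intro A hA
      have h1 := huniform A hA
      rw [card_eq_zero] at h1
      obtain ⟨y, hy⟩ := hint A hA A hA
      rw [h1] at hy
      simp at hy
    rw [hFe]
    simp
  | 1, _ =>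
    -- intersecting singletons: at most one set
    have hone : F.card ≤ 1 := by
      rw [card_le_one]
      intro A hA B hB
      obtain ⟨a, rfl⟩ := card_eq_one.1 (huniform A hA)
      obtain ⟨b, rfl⟩ := card_eq_one.1 (huniform B hB)
      obtain ⟨y, hy⟩ := hint _ hA _ hB
      simp only [mem_inter, mem_singleton] at hy
      rw [show a = b by rw [← hy.1, hy.2]]
    calc F.card ≤ 1 := hone
      _ ≤ (n-1).choose 0 - (n - 1 - 1).choose 0 + 1 := by
          rw [Nat.choose_zero_right, Nat.choose_zero_right]
      _ = (n-1).choose (1-1) - (n - 1 - 1).choose (1-1) + 1 := by norm_num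
  | (k+2), hnk2 =>
    set k' := k + 2 with hk'
    -- transfer to ℕ
    set G : Finset (Finset ℕ) := F.image (fun A => A.image Fin.val) with hG
    have hinj : ∀ A B : Finset (Fin n), A.image Fin.val = B.image Fin.val → A = B := by
      intro A B hAB
      ext a
      constructor
      · intro ha
        have : (a : ℕ) ∈ B.image Fin.val := by rw [← hAB]; exact mem_image_of_mem _ ha
        rw [mem_image] at this
        obtain ⟨b, hb, hba⟩ := this
        rwa [← Fin.val_injective hba]
      · intro ha
        have : (a : ℕ) ∈ A.image Fin.val := by rw [hAB]; exact mem_image_of_mem _ ha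
        rw [mem_image] at this
        obtain ⟨b, hb, hba⟩ := this
        rwa [← Fin.val_injective hba]
    have hGcard : G.card = F.card := by
      rw [hG]
      apply card_image_of_injOn
      intro A hA B hB hAB
      simp only at hAB
      exact hinj A B hAB
    have hGU : Unif G n k' := by
      intro A' hA'
      rw [hG, mem_image] at hA'
      obtain ⟨A, hA, rfl⟩ := hA'
      constructor
      · intro y hy
        rw [mem_image] at hy
        obtain ⟨a, ha, rfl⟩ := hy
        rw [mem_range]
        exact a.isLt
      · rw [card_image_of_injective _ Fin.val_injective]
        exact huniform A hA
    have hGx : Cross G G := by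
      intro A' hA' B' hB'
      rw [hG, mem_image] at hA' hB'
      obtain ⟨A, hA, rfl⟩ := hA'
      obtain ⟨B, hB, rfl⟩ := hB'
      obtain ⟨y, hy⟩ := hint A hA B hB
      rw [mem_inter] at hy
      exact ⟨y, mem_inter.2 ⟨mem_image_of_mem _ hy.1, mem_image_of_mem _ hy.2⟩⟩
    have hGnt : Nontriv G n := by
      intro x hxn
      push_neg at hnotstar
      obtain ⟨A, hA, hxA⟩ := hnotstar ⟨x, hxn⟩
      refine ⟨A.image Fin.val, by rw [hG]; exact mem_image_of_mem _ hA, ?_⟩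
      intro hx
      rw [mem_image] at hx
      obtain ⟨a, ha, hav⟩ := hx
      apply hxA
      have : a = ⟨x, hxn⟩ := Fin.val_injective (by rw [hav])
      rwa [← this]
    have := HMnat (fmeasure G) n k' G le_rfl (by omega) hnk2 hGU hGx hGnt
    rw [hGcard] at this
    omega
end

section
/- Let G be a graph with vertex cover X of size s ≥ 2 where every vertex of X has degree at least 2s, and such that V(G)∖X is an independent set with every vertex outside X having degree at most s. Let v ∈ X have minimum degree in X. Then for t ≥ 3, modifying G by deleting s-1 edges from v to neighbours outside X and adding s-1 edges from a previously isolated vertex w to the vertices of X∖{v} does not decrease ∑_u C(d_u, t). -/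
lemma tele (d k r : ℕ) (hk : k ≤ d) :
    d.choose (r+1) = (d-k).choose (r+1) + ∑ i ∈ Finset.range k, (d-1-i).choose r := by
  induction k with
  | zero => simp
  | succ k ih =>
    have hk' : k ≤ d := by omega
    rw [ih hk', Finset.sum_range_succ]
    have h1 : d - k = (d - (k+1)) + 1 := by omega
    have h2 : d - 1 - k = d - (k+1) := by omega
    rw [h1, h2, Nat.choose_succ_succ, Nat.succ_eq_add_one]
    omega

lemma lemB (s t : ℕ) (ht : 3 ≤ t) (hs : 2 ≤ s) :
    2 * (s-1).choose (t-1) ≤ s * (s+1).choose (t-2) := by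
  have h1 : (s-1).choose (t-1) * (t-1) = (s-1).choose (t-2) * (s-1-(t-2)) := by
    have : t - 1 = (t-2) + 1 := by omega
    rw [this, Nat.choose_succ_right_eq]
  have h2 : (s-1).choose (t-2) ≤ (s+1).choose (t-2) := Nat.choose_le_choose _ (by omega)
  have h3 : 2 * ((s-1).choose (t-1) * (t-1)) ≤ s * (s+1).choose (t-2) * (t-1) := by
    rw [h1]
    have hco : 2 * (s-1-(t-2)) ≤ s * (t-1) :=
      calc 2 * (s-1-(t-2)) ≤ 2 * s := by omega
        _ = s * 2 := by ring
        _ ≤ s * (t-1) := Nat.mul_le_mul_left s (by omega)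
    calc 2 * ((s-1).choose (t-2) * (s-1-(t-2))) = (s-1).choose (t-2) * (2*(s-1-(t-2))) := by ring
      _ ≤ (s-1).choose (t-2) * (s*(t-1)) := Nat.mul_le_mul_left _ hco
      _ ≤ (s+1).choose (t-2) * (s * (t-1)) := Nat.mul_le_mul_right _ h2
      _ = s * (s+1).choose (t-2) * (t-1) := by ring
  have ht1 : 0 < t - 1 := by omega
  exact Nat.le_of_mul_le_mul_right (by calc 2 * (s-1).choose (t-1) * (t-1) = 2 * ((s-1).choose (t-1) * (t-1)) := by ring
    _ ≤ s * (s+1).choose (t-2) * (t-1) := h3) ht1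

lemma keyK (d s t : ℕ) (ht : 3 ≤ t) (hs : 2 ≤ s) (hd : 2*s ≤ d) :
    d.choose t + (s-1) * (s-1).choose (t-1) ≤ (d-(s-1)).choose t + (s-1) * d.choose (t-1) := by
  have ht' : t = (t-1) + 1 := by omega
  have htele : d.choose t = (d-(s-1)).choose t + ∑ j ∈ Finset.range (s-1), (d-1-j).choose (t-1) := by
    rw [ht']; exact tele d (s-1) (t-1) (by omega)
  have hterm : ∀ j ∈ Finset.range (s-1),
      (d-1-j).choose (t-1) + (j+1) * (s+1).choose (t-2) ≤ d.choose (t-1) := by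
    intro j hj
    rw [Finset.mem_range] at hj
    have ht'' : t - 1 = (t-2) + 1 := by omega
    have htele2 : d.choose (t-1) = (d-(j+1)).choose (t-1) + ∑ i ∈ Finset.range (j+1), (d-1-i).choose (t-2) := by
      rw [ht'']; exact tele d (j+1) (t-2) (by omega)
    have h1 : (d-1-j) = d - (j+1) := by omega
    have h2 : (j+1) * (s+1).choose (t-2) ≤ ∑ i ∈ Finset.range (j+1), (d-1-i).choose (t-2) := by
      calc (j+1) * (s+1).choose (t-2) = ∑ _i ∈ Finset.range (j+1), (s+1).choose (t-2) := by
            rw [Finset.sum_const, Finset.card_range, smul_eq_mul]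
        _ ≤ _ := Finset.sum_le_sum (fun i hi => Nat.choose_le_choose _ (by
            rw [Finset.mem_range] at hi; omega))
    rw [htele2, h1]
    omega
  have hsum : ∑ j ∈ Finset.range (s-1), ((d-1-j).choose (t-1) + (j+1) * (s+1).choose (t-2))
      ≤ (s-1) * d.choose (t-1) := by
    calc _ ≤ ∑ _j ∈ Finset.range (s-1), d.choose (t-1) := Finset.sum_le_sum hterm
      _ = (s-1) * d.choose (t-1) := by rw [Finset.sum_const, Finset.card_range, smul_eq_mul]
  rw [Finset.sum_add_distrib] at hsum
  have hgauss : (s-1) * (s-1).choose (t-1) ≤ ∑ j ∈ Finset.range (s-1), (j+1) * (s+1).choose (t-2) := by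
    have hB := lemB s t ht hs
    have hfac : ∑ j ∈ Finset.range (s-1), (j+1) * (s+1).choose (t-2)
        = (∑ j ∈ Finset.range (s-1), (j+1)) * (s+1).choose (t-2) := by
      rw [Finset.sum_mul]
    rw [hfac]
    have hid : ∑ j ∈ Finset.range (s-1), (j+1) = ∑ j ∈ Finset.range s, j := by
      have hs1 : s = (s-1)+1 := by omega
      conv_rhs => rw [hs1, Finset.sum_range_succ']
      simp
    have hg : (∑ j ∈ Finset.range (s-1), (j+1)) * 2 = s * (s-1) := by
      rw [hid, Finset.sum_range_id_mul_two]
    have h2 : 2 * ((s-1) * (s-1).choose (t-1)) ≤ 2 * ((∑ j ∈ Finset.range (s-1), (j+1)) * (s+1).choose (t-2)) := by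
      calc 2 * ((s-1) * (s-1).choose (t-1)) = (s-1) * (2 * (s-1).choose (t-1)) := by ring
        _ ≤ (s-1) * (s * (s+1).choose (t-2)) := Nat.mul_le_mul_left _ hB
        _ = (s * (s-1)) * (s+1).choose (t-2) := by ring
        _ = ((∑ j ∈ Finset.range (s-1), (j+1)) * 2) * (s+1).choose (t-2) := by rw [hg]
        _ = 2 * ((∑ j ∈ Finset.range (s-1), (j+1)) * (s+1).choose (t-2)) := by ring
    omega
  omega

lemma pascal' (n k : ℕ) (hk : 1 ≤ k) : (n+1).choose k = n.choose k + n.choose (k-1) := by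
  obtain ⟨k, rfl⟩ : ∃ m, k = m+1 := ⟨k-1, by omega⟩
  rw [Nat.choose_succ_succ, Nat.add_sub_cancel]
  exact Nat.add_comm _ _


open scoped Classical in
/-- Shifting `s-1` edges from the minimum-degree cover vertex `v` (to neighbours outside the
cover `X`) onto a previously isolated vertex `w`, joined to `X \ {v}`, does not decrease the
number of `t`-edge stars `∑_u C(d_u, t)`, for `t ≥ 3`. -/
theorem shift_edges_to_isolated {V : Type*} [Fintype V] [DecidableEq V]
    (G : SimpleGraph V) (t s : ℕ) (ht : 3 ≤ t) (hs : 2 ≤ s)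
    (X : Finset V) (hX : X.card = s)
    (hcover : ∀ e ∈ G.edgeSet, ∃ x ∈ X, x ∈ e)
    (hdegX : ∀ x ∈ X, 2 * s ≤ G.degree x)
    (hindep : ∀ a b : V, a ∉ X → b ∉ X → ¬ G.Adj a b)
    (hdegout : ∀ a : V, a ∉ X → G.degree a ≤ s)
    (v : V) (hv : v ∈ X) (hvmin : ∀ x ∈ X, G.degree v ≤ G.degree x)
    (w : V) (hw : G.degree w = 0) (hwX : w ∉ X)
    (N : Finset V) (hN : ∀ a ∈ N, G.Adj v a) (hNX : ∀ a ∈ N, a ∉ X)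
    (hNcard : N.card = s - 1) :
    ∑ u : V, (G.degree u).choose t ≤
      ∑ u : V, ((SimpleGraph.fromEdgeSet
          ((G.edgeSet \ {e | ∃ a ∈ N, e = s(v, a)})
            ∪ {e | ∃ x ∈ X, x ≠ v ∧ e = s(w, x)})).degree u).choose t := by
  classical
  set G' := (SimpleGraph.fromEdgeSet
          ((G.edgeSet \ {e | ∃ a ∈ N, e = s(v, a)})
            ∪ {e | ∃ x ∈ X, x ≠ v ∧ e = s(w, x)})) with hG'
  have hwadj : ∀ a : V, ¬ G.Adj w a := by
    intro a ha
    have h1 : a ∈ G.neighborFinset w := by simpa [SimpleGraph.mem_neighborFinset] using ha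
    have h2 : G.neighborFinset w = ∅ := Finset.card_eq_zero.mp hw
    rw [h2] at h1; exact absurd h1 (Finset.notMem_empty a)
  have hadj : ∀ a b : V, G'.Adj a b ↔
      ((G.Adj a b ∧ ¬ (∃ n ∈ N, (a = v ∧ b = n) ∨ (a = n ∧ b = v))) ∨
       (∃ x ∈ X, x ≠ v ∧ ((a = w ∧ b = x) ∨ (a = x ∧ b = w)))) ∧ a ≠ b := by
    intro a b
    rw [hG', SimpleGraph.fromEdgeSet_adj]
    simp only [Set.mem_union, Set.mem_diff, Set.mem_setOf_eq, SimpleGraph.mem_edgeSet,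
      Sym2.eq_iff]
  -- basic facts
  have hNv : v ∉ N := fun h => (G.irrefl (hN v h))
  have hNw : w ∉ N := fun h => hwadj v ((hN w h).symm)
  have hwv : w ≠ v := fun h => hwX (h ▸ hv)
  -- case: untouched vertices
  have hnb0 : ∀ u : V, u ∉ X → u ∉ N → u ≠ w → G'.neighborFinset u = G.neighborFinset u := by
    intro u hu1 hu2 hu3
    ext b
    rw [SimpleGraph.mem_neighborFinset, SimpleGraph.mem_neighborFinset, hadj]
    constructor
    · rintro ⟨⟨h, -⟩ | ⟨x, hx, hxv, ⟨huw, rfl⟩ | ⟨rfl, -⟩⟩, hne⟩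
      · exact h
      · exact absurd huw hu3
      · exact absurd hx hu1
    · intro h
      refine ⟨Or.inl ⟨h, ?_⟩, h.ne⟩
      rintro ⟨n, hn, ⟨rfl, -⟩ | ⟨rfl, -⟩⟩
      · exact hu1 hv
      · exact hu2 hn
  -- case: w
  have hnbw : G'.neighborFinset w = X.erase v := by
    ext b
    rw [SimpleGraph.mem_neighborFinset, hadj, Finset.mem_erase]
    constructor
    · rintro ⟨⟨h, -⟩ | ⟨x, hx, hxv, ⟨-, rfl⟩ | ⟨rfl, -⟩⟩, hne⟩
      · exact absurd h (hwadj b)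
      · exact ⟨hxv, hx⟩
      · exact absurd hx hwX
    · rintro ⟨hbv, hbX⟩
      exact ⟨Or.inr ⟨b, hbX, hbv, Or.inl ⟨rfl, rfl⟩⟩, fun h => hwX (h ▸ hbX)⟩
  -- case: v
  have hnbv : G'.neighborFinset v = G.neighborFinset v \ N := by
    ext b
    rw [SimpleGraph.mem_neighborFinset, hadj, Finset.mem_sdiff, SimpleGraph.mem_neighborFinset]
    constructor
    · rintro ⟨⟨h, hd⟩ | ⟨x, hx, hxv, ⟨hvw', rfl⟩ | ⟨rfl, rfl⟩⟩, hne⟩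
      · exact ⟨h, fun hb => hd ⟨b, hb, Or.inl ⟨rfl, rfl⟩⟩⟩
      · exact absurd hvw'.symm hwv
      · exact absurd rfl hxv
    · rintro ⟨h, hbN⟩
      refine ⟨Or.inl ⟨h, ?_⟩, h.ne⟩
      rintro ⟨n, hn, ⟨-, rfl⟩ | ⟨rfl, -⟩⟩
      · exact hbN hn
      · exact hNv hn
  -- case: x in X, x ≠ v
  have hnbX : ∀ x, x ∈ X → x ≠ v → G'.neighborFinset x = insert w (G.neighborFinset x) := by
    intro u huX huv
    ext b
    rw [SimpleGraph.mem_neighborFinset, hadj, Finset.mem_insert, SimpleGraph.mem_neighborFinset]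
    constructor
    · rintro ⟨⟨h, -⟩ | ⟨x, hx, hxv, ⟨huw, rfl⟩ | ⟨rfl, rfl⟩⟩, hne⟩
      · exact Or.inr h
      · exact absurd (huw ▸ huX) hwX
      · exact Or.inl rfl
    · rintro (rfl | h)
      · exact ⟨Or.inr ⟨u, huX, huv, Or.inr ⟨rfl, rfl⟩⟩, fun h => hwX (h ▸ huX)⟩
      · refine ⟨Or.inl ⟨h, ?_⟩, h.ne⟩
        rintro ⟨n, hn, ⟨rfl, -⟩ | ⟨rfl, -⟩⟩
        · exact huv rfl
        · exact hNX _ hn huX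
  -- case: a in N
  have hnbN : ∀ a, a ∈ N → G'.neighborFinset a = (G.neighborFinset a).erase v := by
    intro a haN
    have haX : a ∉ X := hNX a haN
    have hav : a ≠ v := fun h => hNv (h ▸ haN)
    have haw : a ≠ w := fun h => hNw (h ▸ haN)
    ext b
    rw [SimpleGraph.mem_neighborFinset, hadj, Finset.mem_erase, SimpleGraph.mem_neighborFinset]
    constructor
    · rintro ⟨⟨h, hd⟩ | ⟨x, hx, hxv, ⟨haw', rfl⟩ | ⟨rfl, -⟩⟩, hne⟩
      · exact ⟨fun hb => hd ⟨a, haN, Or.inr ⟨rfl, hb⟩⟩, h⟩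
      · exact absurd haw' haw
      · exact absurd hx haX
    · rintro ⟨hbv, h⟩
      refine ⟨Or.inl ⟨h, ?_⟩, h.ne⟩
      rintro ⟨n, hn, ⟨rfl, -⟩ | ⟨-, rfl⟩⟩
      · exact hav rfl
      · exact hbv rfl
  -- degree computations
  have hdw' : G'.degree w = s - 1 := by
    rw [← SimpleGraph.card_neighborFinset_eq_degree, hnbw, Finset.card_erase_of_mem hv, hX]
  have hsubN : N ⊆ G.neighborFinset v := fun a ha => by
    rw [SimpleGraph.mem_neighborFinset]; exact hN a ha
  have hdv' : G'.degree v = G.degree v - (s-1) := by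
    rw [← SimpleGraph.card_neighborFinset_eq_degree, hnbv, Finset.card_sdiff_of_subset hsubN, hNcard,
      SimpleGraph.card_neighborFinset_eq_degree]
  have hdX' : ∀ x, x ∈ X → x ≠ v → G'.degree x = G.degree x + 1 := by
    intro x hx hxv
    have hwnb : w ∉ G.neighborFinset x := by
      rw [SimpleGraph.mem_neighborFinset]; exact fun h => hwadj x h.symm
    rw [← SimpleGraph.card_neighborFinset_eq_degree, hnbX x hx hxv,
      Finset.card_insert_of_notMem hwnb, SimpleGraph.card_neighborFinset_eq_degree]
  have hdN' : ∀ a ∈ N, G'.degree a = G.degree a - 1 := by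
    intro a ha
    have hvnb : v ∈ G.neighborFinset a := by
      rw [SimpleGraph.mem_neighborFinset]; exact (hN a ha).symm
    rw [← SimpleGraph.card_neighborFinset_eq_degree, hnbN a ha, Finset.card_erase_of_mem hvnb,
      SimpleGraph.card_neighborFinset_eq_degree]
  have hd0 : ∀ u : V, u ∉ X → u ∉ N → u ≠ w → G'.degree u = G.degree u := by
    intro u h1 h2 h3
    rw [← SimpleGraph.card_neighborFinset_eq_degree, hnb0 u h1 h2 h3,
      SimpleGraph.card_neighborFinset_eq_degree]
  -- summation
  set S : Finset V := insert w (X ∪ N) with hS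
  have hwS : w ∉ X ∪ N := by
    rw [Finset.mem_union]; rintro (h | h); exacts [hwX h, hNw h]
  have hdisj : Disjoint X N := Finset.disjoint_left.mpr (fun {a} ha hN' => hNX a hN' ha)
  have hcard : (X.erase v).card = s - 1 := by rw [Finset.card_erase_of_mem hv, hX]
  have key := keyK (G.degree v) s t ht hs (hdegX v hv)
  have hSmain : ∑ u ∈ S, (G.degree u).choose t ≤ ∑ u ∈ S, (G'.degree u).choose t := by
    rw [hS, Finset.sum_insert hwS, Finset.sum_insert hwS, Finset.sum_union hdisj,
      Finset.sum_union hdisj,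
      ← Finset.add_sum_erase X (fun u => (G.degree u).choose t) hv,
      ← Finset.add_sum_erase X (fun u => (G'.degree u).choose t) hv]
    have hfw : (G.degree w).choose t = 0 := by
      rw [hw]; exact Nat.choose_eq_zero_of_lt (by omega)
    have hgw : (G'.degree w).choose t = (s-1).choose t := by rw [hdw']
    have hgv : (G'.degree v).choose t = (G.degree v - (s-1)).choose t := by rw [hdv']
    have hXe : ∑ x ∈ X.erase v, (G.degree x).choose t + (s-1) * (G.degree v).choose (t-1)
        ≤ ∑ x ∈ X.erase v, (G'.degree x).choose t := by
      have hterm : ∀ x ∈ X.erase v,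
          (G.degree x).choose t + (G.degree v).choose (t-1) ≤ (G'.degree x).choose t := by
        intro x hx
        rw [Finset.mem_erase] at hx
        rw [hdX' x hx.2 hx.1, pascal' _ t (by omega)]
        exact Nat.add_le_add_left (Nat.choose_le_choose _ (hvmin x hx.2)) _
      calc ∑ x ∈ X.erase v, (G.degree x).choose t + (s-1) * (G.degree v).choose (t-1)
          = ∑ x ∈ X.erase v, ((G.degree x).choose t + (G.degree v).choose (t-1)) := by
            rw [Finset.sum_add_distrib, Finset.sum_const, hcard, smul_eq_mul]
        _ ≤ _ := Finset.sum_le_sum hterm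
    have hNsum : ∑ a ∈ N, (G.degree a).choose t
        ≤ ∑ a ∈ N, (G'.degree a).choose t + (s-1) * (s-1).choose (t-1) := by
      have hterm : ∀ a ∈ N,
          (G.degree a).choose t ≤ (G'.degree a).choose t + (s-1).choose (t-1) := by
        intro a ha
        have hpos : 1 ≤ G.degree a := by
          have : v ∈ G.neighborFinset a := by
            rw [SimpleGraph.mem_neighborFinset]; exact (hN a ha).symm
          have := Finset.card_pos.mpr ⟨v, this⟩
          rwa [SimpleGraph.card_neighborFinset_eq_degree] at this
        have hda : G.degree a = (G.degree a - 1) + 1 := by omega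
        rw [hdN' a ha, hda, pascal' _ t (by omega)]
        refine Nat.add_le_add_left (Nat.choose_le_choose _ ?_) _
        have := hdegout a (hNX a ha)
        omega
      calc ∑ a ∈ N, (G.degree a).choose t
          ≤ ∑ a ∈ N, ((G'.degree a).choose t + (s-1).choose (t-1)) := Finset.sum_le_sum hterm
        _ = ∑ a ∈ N, (G'.degree a).choose t + (s-1) * (s-1).choose (t-1) := by
            rw [Finset.sum_add_distrib, Finset.sum_const, hNcard, smul_eq_mul]
    omega
  have hcompl : ∑ u ∈ Sᶜ, (G.degree u).choose t = ∑ u ∈ Sᶜ, (G'.degree u).choose t := by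
    refine Finset.sum_congr rfl (fun u hu => ?_)
    rw [Finset.mem_compl, hS, Finset.mem_insert, Finset.mem_union] at hu
    push_neg at hu
    rw [hd0 u hu.2.1 hu.2.2 hu.1]
  rw [← Finset.sum_add_sum_compl S (fun u => (G.degree u).choose t),
    ← Finset.sum_add_sum_compl S (fun u => (G'.degree u).choose t), hcompl]
  exact Nat.add_le_add_right hSmain _
end
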